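/- arXiv:0907.4866 — 6 statements merged into one kernel-verified Lean document; each statement's English description precedes it below -/
import Mathlib

section
/- Let X, Y : ℝ^d → ℝ^d be Borel measurable, let ρ : ℝ^d → (0,∞) be Borel measurable with ρ locally integrable, and let 𝒞 be a countable subset of C_c⁺(ℝ^d) that is dense in C_c⁺(ℝ^d) with respect to the uniform norm. Assume that ∫_{ℝ^d} φ(Y(x)) ψ(x) dx = ∫_{ℝ^d} φ(x) ψ(X(x)) ρ(x) dx for all φ, ψ ∈ 𝒞. Then X(Y(x)) = x and Y(X(x)) = x for Lebesgue-almost every x ∈ ℝ^d (so Y is a measurable inverse of X up to null sets), and ∫_{ℝ^d} φ(Y(x)) dx = ∫_{ℝ^d} φ(x) ρ(x) dx for every Borel measurable φ : ℝ^d → [0,∞], i.e. the image of Lebesgue measure under Y equals ρ·ℒ. -/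
open MeasureTheory Metric Set
open scoped ENNReal NNReal

namespace Stmt1Aux

variable {α : Type*} [NormedAddCommGroup α]

/-- A continuous bump: equal to 1 on the ball of radius `n`, supported in the closed ball
of radius `n+1`. -/
noncomputable def bump (n : ℕ) (x : α) : ℝ := min 1 (max 0 ((n : ℝ) + 1 - ‖x‖))

lemma bump_nonneg (n : ℕ) (x : α) : 0 ≤ bump n x :=
  le_min zero_le_one (le_max_left _ _)

lemma bump_le_one (n : ℕ) (x : α) : bump n x ≤ 1 := min_le_left _ _

lemma bump_continuous (n : ℕ) : Continuous (bump n : α → ℝ) :=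
  continuous_const.min (continuous_const.max (continuous_const.sub continuous_norm))

lemma bump_eq_one {n : ℕ} {x : α} (h : ‖x‖ ≤ n) : bump n x = 1 := by
  have h1 : (1:ℝ) ≤ max 0 ((n : ℝ) + 1 - ‖x‖) := le_max_of_le_right (by linarith)
  exact min_eq_left h1

lemma bump_eq_zero {n : ℕ} {x : α} (h : (n : ℝ) + 1 ≤ ‖x‖) : bump n x = 0 := by
  have h1 : max 0 ((n : ℝ) + 1 - ‖x‖) = 0 := max_eq_left (by linarith)
  rw [bump, h1]
  exact min_eq_right zero_le_one

lemma bump_hasCompactSupport [ProperSpace α] (n : ℕ) :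
    HasCompactSupport (bump n : α → ℝ) := by
  apply HasCompactSupport.intro (isCompact_closedBall (0 : α) ((n : ℝ) + 1))
  intro x hx
  apply bump_eq_zero
  simp only [mem_closedBall, dist_zero_right, not_le] at hx
  exact hx.le

lemma bump_mono {n m : ℕ} (h : n ≤ m) (x : α) : bump n x ≤ bump m x := by
  apply min_le_min le_rfl
  apply max_le_max le_rfl
  have : (n : ℝ) ≤ m := Nat.cast_le.2 h
  linarith

lemma bump_ofReal_le_one (n : ℕ) (x : α) : ENNReal.ofReal (bump n x) ≤ 1 :=
  ENNReal.ofReal_le_one.2 (bump_le_one n x)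

/-- Monotone-convergence along bumps. -/
lemma lintegral_mul_bump_iSup {β : Type*} [MeasurableSpace β]
    [MeasurableSpace α] [OpensMeasurableSpace α]
    (ν : Measure β) {g : β → α} (hg : Measurable g) {f : β → ℝ≥0∞} (hf : Measurable f) :
    ⨆ n, ∫⁻ x, f x * ENNReal.ofReal (bump n (g x)) ∂ν = ∫⁻ x, f x ∂ν := by
  have h1 := lintegral_iSup (μ := ν)
      (f := fun n x => f x * ENNReal.ofReal (bump n (g x)))
      (fun n => hf.fun_mul (((bump_continuous n).measurable.comp hg).ennreal_ofReal))
      (fun n m h x => mul_le_mul_right (ENNReal.ofReal_le_ofReal (bump_mono h (g x))) _)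
  rw [← h1]
  refine lintegral_congr fun x => ?_
  apply le_antisymm
  · exact iSup_le fun n => by
      calc f x * ENNReal.ofReal (bump n (g x)) ≤ f x * 1 :=
            mul_le_mul_right (bump_ofReal_le_one n (g x)) _
        _ = f x := mul_one _
  · obtain ⟨n, hn⟩ := exists_nat_ge ‖g x‖
    refine le_iSup_of_le n ?_
    rw [bump_eq_one hn, ENNReal.ofReal_one, mul_one]

lemma le_of_forall_ofReal_eps {a b C : ℝ≥0∞} (hC : C ≠ ∞)
    (h : ∀ ε : ℝ, 0 < ε → a ≤ b + ENNReal.ofReal ε * C) : a ≤ b := by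
  refine ENNReal.le_of_forall_pos_le_add fun δ hδ _ => ?_
  have hc : 0 ≤ C.toReal := ENNReal.toReal_nonneg
  have hpos : (0:ℝ) < C.toReal + 1 := by linarith
  have hε : (0:ℝ) < (δ : ℝ) / (C.toReal + 1) := div_pos (by exact_mod_cast hδ) hpos
  refine (h _ hε).trans (add_le_add_right ?_ b)
  calc ENNReal.ofReal ((δ : ℝ) / (C.toReal + 1)) * C
      = ENNReal.ofReal ((δ : ℝ) / (C.toReal + 1)) * ENNReal.ofReal C.toReal := by
        rw [ENNReal.ofReal_toReal hC]
    _ = ENNReal.ofReal ((δ : ℝ) / (C.toReal + 1) * C.toReal) := (ENNReal.ofReal_mul hε.le).symm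
    _ ≤ ENNReal.ofReal (δ : ℝ) := by
        apply ENNReal.ofReal_le_ofReal
        have h1 : (δ : ℝ) / (C.toReal + 1) * C.toReal ≤ (δ : ℝ) / (C.toReal + 1) * (C.toReal + 1) :=
          mul_le_mul_of_nonneg_left (by linarith) hε.le
        rwa [div_mul_cancel₀ _ (ne_of_gt hpos)] at h1
    _ = (δ : ℝ≥0∞) := ENNReal.ofReal_coe_nnreal

/-- A nonnegative continuous function with compact support is bounded. -/
lemma cc_bound {φ : α → ℝ} (hc : Continuous φ) (hs : HasCompactSupport φ) :
    ∃ C : ℝ, 0 ≤ C ∧ ∀ x, φ x ≤ C := by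
  have hr : IsCompact (range φ) := hs.isCompact_range hc
  obtain ⟨C, hC⟩ := hr.bddAbove
  refine ⟨max C 0, le_max_right _ _, fun x => le_trans (hC (mem_range_self x)) (le_max_left _ _)⟩

lemma lintegral_cc_mul_fin [MeasurableSpace α] [OpensMeasurableSpace α]
    (ℒ : Measure α) {w : α → ℝ≥0∞} (hw : Measurable w)
    (hwfin : ∀ K : Set α, IsCompact K → ∫⁻ x in K, w x ∂ℒ < ∞)
    {φ : α → ℝ} (hc : Continuous φ) (hs : HasCompactSupport φ) :
    ∫⁻ x, ENNReal.ofReal (φ x) * w x ∂ℒ < ∞ := by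
  obtain ⟨C, hC0, hC⟩ := cc_bound hc hs
  have hb : ∀ x, ENNReal.ofReal (φ x) * w x
      ≤ (tsupport φ).indicator (fun x => ENNReal.ofReal C * w x) x := by
    intro x
    by_cases hx : x ∈ tsupport φ
    · rw [indicator_of_mem hx]
      exact mul_le_mul_left (ENNReal.ofReal_le_ofReal (hC x)) _
    · rw [indicator_of_notMem hx, image_eq_zero_of_notMem_tsupport hx]
      simp
  calc ∫⁻ x, ENNReal.ofReal (φ x) * w x ∂ℒ
      ≤ ∫⁻ x, (tsupport φ).indicator (fun x => ENNReal.ofReal C * w x) x ∂ℒ :=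
        lintegral_mono hb
    _ = ∫⁻ x in tsupport φ, ENNReal.ofReal C * w x ∂ℒ :=
        lintegral_indicator (isClosed_tsupport φ).measurableSet _
    _ = ENNReal.ofReal C * ∫⁻ x in tsupport φ, w x ∂ℒ := lintegral_const_mul _ hw
    _ < ∞ := ENNReal.mul_lt_top ENNReal.ofReal_lt_top (hwfin _ hs)


section Ext

variable [ProperSpace α] [MeasurableSpace α] [BorelSpace α]

/-- Two finite Borel measures agreeing on all nonnegative continuous compactly supported
functions are equal. -/
lemma ext_of_cc (ν₁ ν₂ : Measure α) [IsFiniteMeasure ν₁] [IsFiniteMeasure ν₂]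
    (h : ∀ f : α → ℝ, Continuous f → HasCompactSupport f → (∀ x, 0 ≤ f x) →
      ∫⁻ x, ENNReal.ofReal (f x) ∂ν₁ = ∫⁻ x, ENNReal.ofReal (f x) ∂ν₂) : ν₁ = ν₂ := by
  -- total masses agree
  have hbump : ∀ ν : Measure α, ⨆ n, ∫⁻ x, ENNReal.ofReal (bump n x) ∂ν = ν univ := by
    intro ν
    have := lintegral_mul_bump_iSup (α := α) ν measurable_id (f := fun _ => 1) measurable_const
    simpa [one_mul, lintegral_one] using this
  have huniv : ν₁ univ = ν₂ univ := by
    rw [← hbump ν₁, ← hbump ν₂]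
    exact iSup_congr fun n =>
      h (bump n) (bump_continuous n) (bump_hasCompactSupport n) (bump_nonneg n)
  -- open sets
  have hopen : ∀ U : Set α, IsOpen U → ν₁ U = ν₂ U := by
    intro U hU
    rcases eq_or_ne U univ with rfl | hne
    · exact huniv
    have hcne : Uᶜ.Nonempty := nonempty_compl.2 hne
    set f : ℕ → α → ℝ := fun n x => min 1 ((n : ℝ) * infDist x Uᶜ) * bump n x with hf
    have hfc : ∀ n, Continuous (f n) := fun n =>
      (continuous_const.min (continuous_const.mul (continuous_infDist_pt Uᶜ))).mul (bump_continuous n)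
    have hfnn : ∀ n x, 0 ≤ f n x := fun n x =>
      mul_nonneg (le_min zero_le_one (mul_nonneg (Nat.cast_nonneg n) infDist_nonneg)) (bump_nonneg n x)
    have hfs : ∀ n, HasCompactSupport (f n) := fun n =>
      (bump_hasCompactSupport n).mul_left
    have hfle : ∀ n x, f n x ≤ 1 := fun n x => by
      have h1 : min 1 ((n : ℝ) * infDist x Uᶜ) ≤ 1 := min_le_left _ _
      have h2 : bump n x ≤ 1 := bump_le_one n x
      have h0 : 0 ≤ min 1 ((n : ℝ) * infDist x Uᶜ) := le_min zero_le_one (mul_nonneg (Nat.cast_nonneg n) infDist_nonneg)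
      calc f n x ≤ 1 * 1 := mul_le_mul h1 h2 (bump_nonneg n x) zero_le_one
        _ = 1 := one_mul 1
    have hmono : ∀ (n m : ℕ), n ≤ m → ∀ x, f n x ≤ f m x := by
      intro n m hnm x
      have h3 : (0:ℝ) ≤ infDist x Uᶜ := infDist_nonneg
      apply mul_le_mul
      · exact min_le_min le_rfl (mul_le_mul_of_nonneg_right (Nat.cast_le.2 hnm) h3)
      · exact bump_mono hnm x
      · exact bump_nonneg n x
      · exact le_min zero_le_one (mul_nonneg (Nat.cast_nonneg m) infDist_nonneg)
    -- pointwise supremum is the indicator of U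
    have hsup : ∀ x, (⨆ n, ENNReal.ofReal (f n x)) = U.indicator (fun _ => (1:ℝ≥0∞)) x := by
      intro x
      by_cases hx : x ∈ U
      · have hd : 0 < infDist x Uᶜ := by
          rcases lt_or_eq_of_le (infDist_nonneg (s := Uᶜ) (x := x)) with h' | h'
          · exact h'
          · exact absurd (((hU.isClosed_compl).mem_iff_infDist_zero hcne).2 h'.symm) (fun hc => hc hx)
        obtain ⟨n₀, hn₀⟩ := exists_nat_ge (max ‖x‖ (infDist x Uᶜ)⁻¹)
        have h1 : f n₀ x = 1 := by
          have hb : bump n₀ x = 1 := bump_eq_one ((le_max_left _ _).trans hn₀)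
          have hm : min 1 ((n₀ : ℝ) * infDist x Uᶜ) = 1 := by
            apply min_eq_left
            have : (infDist x Uᶜ)⁻¹ ≤ (n₀ : ℝ) := (le_max_right _ _).trans hn₀
            rw [inv_le_iff_one_le_mul₀ hd] at this
            linarith [this]
          rw [hf]; simp only; rw [hb, hm, one_mul]
        rw [indicator_of_mem hx]
        apply le_antisymm
        · exact iSup_le fun n => ENNReal.ofReal_le_one.2 (hfle n x)
        · refine le_iSup_of_le n₀ ?_
          rw [h1, ENNReal.ofReal_one]
      · have : ∀ n, f n x = 0 := by
          intro n
          have hd0 : infDist x Uᶜ = 0 := infDist_zero_of_mem hx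
          rw [hf]; simp [hd0]
        simp [this, indicator_of_notMem hx]
    have hval : ∀ ν : Measure α, ν U = ⨆ n, ∫⁻ x, ENNReal.ofReal (f n x) ∂ν := by
      intro ν
      have h1 := lintegral_iSup (μ := ν) (f := fun n x => ENNReal.ofReal (f n x))
        (fun n => (hfc n).measurable.ennreal_ofReal)
        (fun n m hnm x => ENNReal.ofReal_le_ofReal (hmono n m hnm x))
      calc ν U = ∫⁻ x, U.indicator (fun _ => (1:ℝ≥0∞)) x ∂ν := by
            rw [lintegral_indicator hU.measurableSet, setLIntegral_one]
        _ = ∫⁻ x, ⨆ n, ENNReal.ofReal (f n x) ∂ν := lintegral_congr fun x => (hsup x).symm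
        _ = ⨆ n, ∫⁻ x, ENNReal.ofReal (f n x) ∂ν := h1
    rw [hval ν₁, hval ν₂]
    exact iSup_congr fun n => h (f n) (hfc n) (hfs n) (hfnn n)
  exact MeasureTheory.ext_of_generate_finite {s | IsOpen s}
    BorelSpace.measurable_eq isPiSystem_isOpen
    (fun s hs => hopen s hs) huniv


end Ext

theorem master [ProperSpace α] [MeasurableSpace α] [BorelSpace α]
    (ℒ : Measure α) [IsFiniteMeasureOnCompacts ℒ]
    (X Y : α → α) (hX : Measurable X) (hY : Measurable Y)
    (w : α → ℝ≥0∞) (hw : Measurable w)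
    (hwfin : ∀ K : Set α, IsCompact K → ∫⁻ x in K, w x ∂ℒ < ∞)
    (𝒞 : Set (α → ℝ))
    (h𝒞sub : ∀ φ ∈ 𝒞, Continuous φ ∧ HasCompactSupport φ ∧ ∀ x, 0 ≤ φ x)
    (h𝒞dense : ∀ φ : α → ℝ, Continuous φ → HasCompactSupport φ → (∀ x, 0 ≤ φ x) →
      ∀ ε > 0, ∃ ψ ∈ 𝒞, ∀ x, |φ x - ψ x| ≤ ε)
    (hEqL : ∀ φ ∈ 𝒞, ∀ ψ ∈ 𝒞,
      ∫⁻ x, ENNReal.ofReal (φ (Y x)) * ENNReal.ofReal (ψ x) ∂ℒ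
        = ∫⁻ x, ENNReal.ofReal (φ x) * ENNReal.ofReal (ψ (X x)) * w x ∂ℒ) :
    Measure.map (fun v => (Y v, v)) ℒ = Measure.map (fun u => (u, X u)) (ℒ.withDensity w) := by
  have mI : ∀ {φ : α → ℝ}, Continuous φ → Measurable fun x => ENNReal.ofReal (φ x) :=
    fun hc => hc.measurable.ennreal_ofReal
  have mX : ∀ {φ : α → ℝ}, Continuous φ → Measurable fun x => ENNReal.ofReal (φ (X x)) :=
    fun hc => (hc.measurable.comp hX).ennreal_ofReal
  have mY : ∀ {φ : α → ℝ}, Continuous φ → Measurable fun x => ENNReal.ofReal (φ (Y x)) :=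
    fun hc => (hc.measurable.comp hY).ennreal_ofReal
  have mB : ∀ n : ℕ, Measurable fun x : α => ENNReal.ofReal (bump n x) :=
    fun n => (bump_continuous n).measurable.ennreal_ofReal
  -- finiteness facts
  have hfin1 : ∀ φ : α → ℝ, Continuous φ → HasCompactSupport φ →
      ∫⁻ x, ENNReal.ofReal (φ x) ∂ℒ < ∞ := fun φ hc hs =>
    (hc.integrable_of_hasCompactSupport hs).lintegral_lt_top
  have hfin2 : ∀ φ : α → ℝ, Continuous φ → HasCompactSupport φ →
      ∫⁻ x, ENNReal.ofReal (φ x) * w x ∂ℒ < ∞ := fun φ hc hs =>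
    lintegral_cc_mul_fin ℒ hw hwfin hc hs
  have hfinW : ∀ n : ℕ, ∫⁻ x, w x * ENNReal.ofReal (bump n x) ∂ℒ < ∞ := by
    intro n
    have hb : ∀ x, w x * ENNReal.ofReal (bump n x)
        ≤ (closedBall (0:α) ((n:ℝ)+1)).indicator w x := by
      intro x
      by_cases hx : x ∈ closedBall (0:α) ((n:ℝ)+1)
      · rw [indicator_of_mem hx]
        calc w x * ENNReal.ofReal (bump n x) ≤ w x * 1 :=
              mul_le_mul_right (bump_ofReal_le_one n x) _
          _ = w x := mul_one _
      · rw [indicator_of_notMem hx]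
        have : bump n x = 0 := by
          apply bump_eq_zero
          simp only [mem_closedBall, dist_zero_right, not_le] at hx
          exact hx.le
        simp [this]
    calc ∫⁻ x, w x * ENNReal.ofReal (bump n x) ∂ℒ
        ≤ ∫⁻ x, (closedBall (0:α) ((n:ℝ)+1)).indicator w x ∂ℒ := lintegral_mono hb
      _ = ∫⁻ x in closedBall (0:α) ((n:ℝ)+1), w x ∂ℒ :=
          lintegral_indicator measurableSet_closedBall _
      _ < ∞ := hwfin _ (isCompact_closedBall _ _)
  -- pointwise approximation facts
  have happrox : ∀ (g φ' : α → ℝ) (ε : ℝ), (∀ x, |g x - φ' x| ≤ ε) → ∀ x,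
      ENNReal.ofReal (g x) ≤ ENNReal.ofReal (φ' x) + ENNReal.ofReal ε := by
    intro g φ' ε h x
    have := abs_le.1 (h x)
    calc ENNReal.ofReal (g x) ≤ ENNReal.ofReal (φ' x + ε) :=
          ENNReal.ofReal_le_ofReal (by linarith)
      _ ≤ _ := ENNReal.ofReal_add_le
  have hbumpapprox : ∀ (n : ℕ) (φ' : α → ℝ) (ε : ℝ), (∀ x, 0 ≤ φ' x) →
      (∀ x, |bump n x - φ' x| ≤ ε) → ∀ x : α,
      ENNReal.ofReal (bump n x) ≤ ENNReal.ofReal (φ' x)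
        + ENNReal.ofReal ε * ENNReal.ofReal (bump (n+1) x) := by
    intro n φ' ε hnn h x
    by_cases hx : ‖x‖ ≤ (n:ℝ) + 1
    · have hb1 : bump (n+1) x = 1 := bump_eq_one (by push_cast; linarith)
      rw [hb1, ENNReal.ofReal_one, mul_one]
      exact happrox _ _ _ h x
    · rw [bump_eq_zero (le_of_not_ge hx)]
      simp
  have hone : ∀ (ψ' : α → ℝ) (n : ℕ) (ε : ℝ), (∀ x, |bump n x - ψ' x| ≤ ε) → ∀ x : α,
      ENNReal.ofReal (ψ' x) ≤ 1 + ENNReal.ofReal ε := by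
    intro ψ' n ε h x
    have := abs_le.1 (h x)
    calc ENNReal.ofReal (ψ' x) ≤ ENNReal.ofReal (1 + ε) := by
          apply ENNReal.ofReal_le_ofReal
          have := bump_le_one n x
          linarith
      _ ≤ 1 + ENNReal.ofReal ε := by
          rw [← ENNReal.ofReal_one]
          exact ENNReal.ofReal_add_le
  -- mass bound on the X side
  have hB1 : ∀ ψ : α → ℝ, Continuous ψ → HasCompactSupport ψ → (∀ x, 0 ≤ ψ x) →
      (∀ φ' ∈ 𝒞, ∫⁻ x, ENNReal.ofReal (φ' (Y x)) * ENNReal.ofReal (ψ x) ∂ℒ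
        = ∫⁻ x, ENNReal.ofReal (φ' x) * ENNReal.ofReal (ψ (X x)) * w x ∂ℒ) →
      ∫⁻ x, ENNReal.ofReal (ψ (X x)) * w x ∂ℒ ≤ ∫⁻ x, ENNReal.ofReal (ψ x) ∂ℒ := by
    intro ψ hψc hψs hψ0 hE
    set W : α → ℝ≥0∞ := fun x => ENNReal.ofReal (ψ (X x)) * w x with hWdef
    have mW : Measurable W := (mX hψc).fun_mul hw
    obtain ⟨Cψ, hCψ0, hCψ⟩ := cc_bound hψc hψs
    set M := ∫⁻ x, ENNReal.ofReal (ψ x) ∂ℒ with hMdef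
    have hMfin : M ≠ ∞ := (hfin1 ψ hψc hψs).ne
    have hTfin : ∀ n : ℕ, ∫⁻ x, W x * ENNReal.ofReal (bump n x) ∂ℒ < ∞ := by
      intro n
      have hb : ∀ x, W x * ENNReal.ofReal (bump n x)
          ≤ ENNReal.ofReal Cψ * (w x * ENNReal.ofReal (bump n x)) := by
        intro x
        calc W x * ENNReal.ofReal (bump n x)
            = ENNReal.ofReal (ψ (X x)) * (w x * ENNReal.ofReal (bump n x)) := by
              rw [hWdef]; ring
          _ ≤ ENNReal.ofReal Cψ * (w x * ENNReal.ofReal (bump n x)) :=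
              mul_le_mul_left (ENNReal.ofReal_le_ofReal (hCψ _)) _
      calc ∫⁻ x, W x * ENNReal.ofReal (bump n x) ∂ℒ
          ≤ ∫⁻ x, ENNReal.ofReal Cψ * (w x * ENNReal.ofReal (bump n x)) ∂ℒ := lintegral_mono hb
        _ = ENNReal.ofReal Cψ * ∫⁻ x, w x * ENNReal.ofReal (bump n x) ∂ℒ :=
            lintegral_const_mul _ (hw.fun_mul (mB n))
        _ < ∞ := ENNReal.mul_lt_top ENNReal.ofReal_lt_top (hfinW n)
    have hkey : ∀ n : ℕ, ∫⁻ x, W x * ENNReal.ofReal (bump n x) ∂ℒ ≤ M := by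
      intro n
      apply le_of_forall_ofReal_eps
        (C := M + ∫⁻ x, W x * ENNReal.ofReal (bump (n+1) x) ∂ℒ)
        (by exact (ENNReal.add_lt_top.2 ⟨hMfin.lt_top, hTfin (n+1)⟩).ne)
      intro ε hε
      obtain ⟨φ', hφ'𝒞, hφ'⟩ := h𝒞dense (bump n) (bump_continuous n)
        (bump_hasCompactSupport n) (bump_nonneg n) ε hε
      obtain ⟨hφ'c, hφ's, hφ'0⟩ := h𝒞sub φ' hφ'𝒞
      have step1 : ∫⁻ x, W x * ENNReal.ofReal (bump n x) ∂ℒ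
          ≤ ∫⁻ x, W x * ENNReal.ofReal (φ' x) ∂ℒ
            + ENNReal.ofReal ε * ∫⁻ x, W x * ENNReal.ofReal (bump (n+1) x) ∂ℒ := by
        have hpt := hbumpapprox n φ' ε hφ'0 hφ'
        calc ∫⁻ x, W x * ENNReal.ofReal (bump n x) ∂ℒ
            ≤ ∫⁻ x, (W x * ENNReal.ofReal (φ' x)
                + ENNReal.ofReal ε * (W x * ENNReal.ofReal (bump (n+1) x))) ∂ℒ := by
              apply lintegral_mono
              intro x
              calc W x * ENNReal.ofReal (bump n x)
                  ≤ W x * (ENNReal.ofReal (φ' x)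
                      + ENNReal.ofReal ε * ENNReal.ofReal (bump (n+1) x)) :=
                    mul_le_mul_right (hpt x) _
                _ = _ := by ring
          _ = _ := by
              rw [lintegral_add_left (mW.fun_mul (mI hφ'c)),
                lintegral_const_mul _ (mW.fun_mul (mB (n+1)))]
      have step2 : ∫⁻ x, W x * ENNReal.ofReal (φ' x) ∂ℒ ≤ M + ENNReal.ofReal ε * M := by
        have heq : ∫⁻ x, W x * ENNReal.ofReal (φ' x) ∂ℒ
            = ∫⁻ x, ENNReal.ofReal (φ' (Y x)) * ENNReal.ofReal (ψ x) ∂ℒ := by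
          rw [hE φ' hφ'𝒞]
          exact lintegral_congr fun x => by rw [hWdef]; ring
        rw [heq]
        calc ∫⁻ x, ENNReal.ofReal (φ' (Y x)) * ENNReal.ofReal (ψ x) ∂ℒ
            ≤ ∫⁻ x, (1 + ENNReal.ofReal ε) * ENNReal.ofReal (ψ x) ∂ℒ :=
              lintegral_mono fun x => mul_le_mul_left (hone φ' n ε hφ' (Y x)) _
          _ = (1 + ENNReal.ofReal ε) * M := lintegral_const_mul _ (mI hψc)
          _ = M + ENNReal.ofReal ε * M := by ring
      calc ∫⁻ x, W x * ENNReal.ofReal (bump n x) ∂ℒ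
          ≤ (M + ENNReal.ofReal ε * M)
            + ENNReal.ofReal ε * ∫⁻ x, W x * ENNReal.ofReal (bump (n+1) x) ∂ℒ :=
            step1.trans (add_le_add_left step2 _)
        _ = M + ENNReal.ofReal ε * (M + ∫⁻ x, W x * ENNReal.ofReal (bump (n+1) x) ∂ℒ) := by
            ring
    calc ∫⁻ x, W x ∂ℒ
        = ⨆ n, ∫⁻ x, W x * ENNReal.ofReal (bump n x) ∂ℒ :=
          (lintegral_mul_bump_iSup ℒ measurable_id mW).symm
      _ ≤ M := iSup_le hkey
  -- mass bound on the Y side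
  have hB2 : ∀ φ : α → ℝ, Continuous φ → HasCompactSupport φ → (∀ x, 0 ≤ φ x) →
      (∀ ψ' ∈ 𝒞, ∫⁻ x, ENNReal.ofReal (φ (Y x)) * ENNReal.ofReal (ψ' x) ∂ℒ
        = ∫⁻ x, ENNReal.ofReal (φ x) * ENNReal.ofReal (ψ' (X x)) * w x ∂ℒ) →
      ∫⁻ x, ENNReal.ofReal (φ (Y x)) ∂ℒ ≤ ∫⁻ x, ENNReal.ofReal (φ x) * w x ∂ℒ := by
    intro φ hφc hφs hφ0 hE
    set V : α → ℝ≥0∞ := fun x => ENNReal.ofReal (φ (Y x)) with hVdef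
    have mV : Measurable V := mY hφc
    obtain ⟨Cφ, hCφ0, hCφ⟩ := cc_bound hφc hφs
    set M := ∫⁻ x, ENNReal.ofReal (φ x) * w x ∂ℒ with hMdef
    have hMfin : M ≠ ∞ := (hfin2 φ hφc hφs).ne
    have hSfin : ∀ n : ℕ, ∫⁻ x, V x * ENNReal.ofReal (bump n x) ∂ℒ < ∞ := by
      intro n
      have hb : ∀ x, V x * ENNReal.ofReal (bump n x)
          ≤ ENNReal.ofReal Cφ * ENNReal.ofReal (bump n x) := fun x =>
        mul_le_mul_left (ENNReal.ofReal_le_ofReal (hCφ _)) _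
      calc ∫⁻ x, V x * ENNReal.ofReal (bump n x) ∂ℒ
          ≤ ∫⁻ x, ENNReal.ofReal Cφ * ENNReal.ofReal (bump n x) ∂ℒ := lintegral_mono hb
        _ = ENNReal.ofReal Cφ * ∫⁻ x, ENNReal.ofReal (bump n x) ∂ℒ :=
            lintegral_const_mul _ (mB n)
        _ < ∞ := ENNReal.mul_lt_top ENNReal.ofReal_lt_top
            (hfin1 (bump n) (bump_continuous n) (bump_hasCompactSupport n))
    have hkey : ∀ n : ℕ, ∫⁻ x, V x * ENNReal.ofReal (bump n x) ∂ℒ ≤ M := by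
      intro n
      apply le_of_forall_ofReal_eps
        (C := M + ∫⁻ x, V x * ENNReal.ofReal (bump (n+1) x) ∂ℒ)
        (by exact (ENNReal.add_lt_top.2 ⟨hMfin.lt_top, hSfin (n+1)⟩).ne)
      intro ε hε
      obtain ⟨ψ', hψ'𝒞, hψ'⟩ := h𝒞dense (bump n) (bump_continuous n)
        (bump_hasCompactSupport n) (bump_nonneg n) ε hε
      obtain ⟨hψ'c, hψ's, hψ'0⟩ := h𝒞sub ψ' hψ'𝒞
      have step1 : ∫⁻ x, V x * ENNReal.ofReal (bump n x) ∂ℒ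
          ≤ ∫⁻ x, V x * ENNReal.ofReal (ψ' x) ∂ℒ
            + ENNReal.ofReal ε * ∫⁻ x, V x * ENNReal.ofReal (bump (n+1) x) ∂ℒ := by
        have hpt := hbumpapprox n ψ' ε hψ'0 hψ'
        calc ∫⁻ x, V x * ENNReal.ofReal (bump n x) ∂ℒ
            ≤ ∫⁻ x, (V x * ENNReal.ofReal (ψ' x)
                + ENNReal.ofReal ε * (V x * ENNReal.ofReal (bump (n+1) x))) ∂ℒ := by
              apply lintegral_mono
              intro x
              calc V x * ENNReal.ofReal (bump n x)
                  ≤ V x * (ENNReal.ofReal (ψ' x)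
                      + ENNReal.ofReal ε * ENNReal.ofReal (bump (n+1) x)) :=
                    mul_le_mul_right (hpt x) _
                _ = _ := by ring
          _ = _ := by
              rw [lintegral_add_left (mV.fun_mul (mI hψ'c)),
                lintegral_const_mul _ (mV.fun_mul (mB (n+1)))]
      have step2 : ∫⁻ x, V x * ENNReal.ofReal (ψ' x) ∂ℒ ≤ M + ENNReal.ofReal ε * M := by
        have heq : ∫⁻ x, V x * ENNReal.ofReal (ψ' x) ∂ℒ
            = ∫⁻ x, ENNReal.ofReal (φ x) * ENNReal.ofReal (ψ' (X x)) * w x ∂ℒ := by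
          rw [← hE ψ' hψ'𝒞]
        rw [heq]
        calc ∫⁻ x, ENNReal.ofReal (φ x) * ENNReal.ofReal (ψ' (X x)) * w x ∂ℒ
            ≤ ∫⁻ x, (1 + ENNReal.ofReal ε) * (ENNReal.ofReal (φ x) * w x) ∂ℒ := by
              apply lintegral_mono
              intro x
              calc ENNReal.ofReal (φ x) * ENNReal.ofReal (ψ' (X x)) * w x
                  = ENNReal.ofReal (ψ' (X x)) * (ENNReal.ofReal (φ x) * w x) := by ring
                _ ≤ (1 + ENNReal.ofReal ε) * (ENNReal.ofReal (φ x) * w x) :=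
                    mul_le_mul_left (hone ψ' n ε hψ' (X x)) _
          _ = (1 + ENNReal.ofReal ε) * M := lintegral_const_mul _ ((mI hφc).fun_mul hw)
          _ = M + ENNReal.ofReal ε * M := by ring
      calc ∫⁻ x, V x * ENNReal.ofReal (bump n x) ∂ℒ
          ≤ (M + ENNReal.ofReal ε * M)
            + ENNReal.ofReal ε * ∫⁻ x, V x * ENNReal.ofReal (bump (n+1) x) ∂ℒ :=
            step1.trans (add_le_add_left step2 _)
        _ = M + ENNReal.ofReal ε * (M + ∫⁻ x, V x * ENNReal.ofReal (bump (n+1) x) ∂ℒ) := by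
            ring
    calc ∫⁻ x, V x ∂ℒ
        = ⨆ n, ∫⁻ x, V x * ENNReal.ofReal (bump n x) ∂ℒ :=
          (lintegral_mul_bump_iSup ℒ measurable_id mV).symm
      _ ≤ M := iSup_le hkey
  -- extension of the identity to all Cc φ with ψ ∈ 𝒞
  have hEq2 : ∀ φ : α → ℝ, Continuous φ → HasCompactSupport φ → (∀ x, 0 ≤ φ x) →
      ∀ ψ ∈ 𝒞, ∫⁻ x, ENNReal.ofReal (φ (Y x)) * ENNReal.ofReal (ψ x) ∂ℒ
        = ∫⁻ x, ENNReal.ofReal (φ x) * ENNReal.ofReal (ψ (X x)) * w x ∂ℒ := by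
    intro φ hφc hφs hφ0 ψ hψ𝒞
    obtain ⟨hψc, hψs, hψ0⟩ := h𝒞sub ψ hψ𝒞
    set M := ∫⁻ x, ENNReal.ofReal (ψ x) ∂ℒ with hMdef
    have hMfin : M ≠ ∞ := (hfin1 ψ hψc hψs).ne
    have hBψ : ∫⁻ x, ENNReal.ofReal (ψ (X x)) * w x ∂ℒ ≤ M :=
      hB1 ψ hψc hψs hψ0 (fun φ' hφ' => hEqL φ' hφ' ψ hψ𝒞)
    have hCne : M + M ≠ ∞ := by
      exact (ENNReal.add_lt_top.2 ⟨hMfin.lt_top, hMfin.lt_top⟩).ne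
    apply le_antisymm
    · apply le_of_forall_ofReal_eps hCne
      intro ε hε
      obtain ⟨φ', hφ'𝒞, hφ'⟩ := h𝒞dense φ hφc hφs hφ0 ε hε
      obtain ⟨hφ'c, hφ's, hφ'0⟩ := h𝒞sub φ' hφ'𝒞
      have hup : ∀ x, ENNReal.ofReal (φ x) ≤ ENNReal.ofReal (φ' x) + ENNReal.ofReal ε :=
        happrox φ φ' ε hφ'
      have hdown : ∀ x, ENNReal.ofReal (φ' x) ≤ ENNReal.ofReal (φ x) + ENNReal.ofReal ε :=
        happrox φ' φ ε (fun x => by rw [abs_sub_comm]; exact hφ' x)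
      calc ∫⁻ x, ENNReal.ofReal (φ (Y x)) * ENNReal.ofReal (ψ x) ∂ℒ
          ≤ ∫⁻ x, (ENNReal.ofReal (φ' (Y x)) * ENNReal.ofReal (ψ x)
              + ENNReal.ofReal ε * ENNReal.ofReal (ψ x)) ∂ℒ := by
            apply lintegral_mono
            intro x
            calc ENNReal.ofReal (φ (Y x)) * ENNReal.ofReal (ψ x)
                ≤ (ENNReal.ofReal (φ' (Y x)) + ENNReal.ofReal ε) * ENNReal.ofReal (ψ x) :=
                  mul_le_mul_left (hup (Y x)) _
              _ = _ := by ring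
        _ = ∫⁻ x, ENNReal.ofReal (φ' (Y x)) * ENNReal.ofReal (ψ x) ∂ℒ
            + ENNReal.ofReal ε * M := by
            rw [lintegral_add_left ((mY hφ'c).fun_mul (mI hψc)),
              lintegral_const_mul _ (mI hψc)]
        _ = ∫⁻ x, ENNReal.ofReal (φ' x) * ENNReal.ofReal (ψ (X x)) * w x ∂ℒ
            + ENNReal.ofReal ε * M := by rw [hEqL φ' hφ'𝒞 ψ hψ𝒞]
        _ ≤ (∫⁻ x, ENNReal.ofReal (φ x) * ENNReal.ofReal (ψ (X x)) * w x ∂ℒ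
            + ENNReal.ofReal ε * ∫⁻ x, ENNReal.ofReal (ψ (X x)) * w x ∂ℒ)
            + ENNReal.ofReal ε * M := by
            apply add_le_add_left
            calc ∫⁻ x, ENNReal.ofReal (φ' x) * ENNReal.ofReal (ψ (X x)) * w x ∂ℒ
                ≤ ∫⁻ x, (ENNReal.ofReal (φ x) * ENNReal.ofReal (ψ (X x)) * w x
                    + ENNReal.ofReal ε * (ENNReal.ofReal (ψ (X x)) * w x)) ∂ℒ := by
                  apply lintegral_mono
                  intro x
                  calc ENNReal.ofReal (φ' x) * ENNReal.ofReal (ψ (X x)) * w x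
                      ≤ (ENNReal.ofReal (φ x) + ENNReal.ofReal ε)
                          * ENNReal.ofReal (ψ (X x)) * w x := by
                        exact mul_le_mul_left (mul_le_mul_left (hdown x) _) _
                    _ = _ := by ring
              _ = _ := by
                  rw [lintegral_add_left (((mI hφc).fun_mul (mX hψc)).fun_mul hw),
                    lintegral_const_mul _ ((mX hψc).fun_mul hw)]
        _ ≤ ∫⁻ x, ENNReal.ofReal (φ x) * ENNReal.ofReal (ψ (X x)) * w x ∂ℒ
            + ENNReal.ofReal ε * (M + M) := by
            rw [mul_add, ← add_assoc]
            apply add_le_add_left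
            apply add_le_add_right
            exact mul_le_mul_right hBψ _
    · apply le_of_forall_ofReal_eps hCne
      intro ε hε
      obtain ⟨φ', hφ'𝒞, hφ'⟩ := h𝒞dense φ hφc hφs hφ0 ε hε
      obtain ⟨hφ'c, hφ's, hφ'0⟩ := h𝒞sub φ' hφ'𝒞
      have hup : ∀ x, ENNReal.ofReal (φ x) ≤ ENNReal.ofReal (φ' x) + ENNReal.ofReal ε :=
        happrox φ φ' ε hφ'
      have hdown : ∀ x, ENNReal.ofReal (φ' x) ≤ ENNReal.ofReal (φ x) + ENNReal.ofReal ε :=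
        happrox φ' φ ε (fun x => by rw [abs_sub_comm]; exact hφ' x)
      calc ∫⁻ x, ENNReal.ofReal (φ x) * ENNReal.ofReal (ψ (X x)) * w x ∂ℒ
          ≤ ∫⁻ x, (ENNReal.ofReal (φ' x) * ENNReal.ofReal (ψ (X x)) * w x
              + ENNReal.ofReal ε * (ENNReal.ofReal (ψ (X x)) * w x)) ∂ℒ := by
            apply lintegral_mono
            intro x
            calc ENNReal.ofReal (φ x) * ENNReal.ofReal (ψ (X x)) * w x
                ≤ (ENNReal.ofReal (φ' x) + ENNReal.ofReal ε)
                    * ENNReal.ofReal (ψ (X x)) * w x :=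
                  mul_le_mul_left (mul_le_mul_left (hup x) _) _
              _ = _ := by ring
        _ = ∫⁻ x, ENNReal.ofReal (φ' x) * ENNReal.ofReal (ψ (X x)) * w x ∂ℒ
            + ENNReal.ofReal ε * ∫⁻ x, ENNReal.ofReal (ψ (X x)) * w x ∂ℒ := by
            rw [lintegral_add_left (((mI hφ'c).fun_mul (mX hψc)).fun_mul hw),
              lintegral_const_mul _ ((mX hψc).fun_mul hw)]
        _ ≤ ∫⁻ x, ENNReal.ofReal (φ' (Y x)) * ENNReal.ofReal (ψ x) ∂ℒ
            + ENNReal.ofReal ε * M := by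
            rw [← hEqL φ' hφ'𝒞 ψ hψ𝒞]
            exact add_le_add_right (mul_le_mul_right hBψ _) _
        _ ≤ (∫⁻ x, ENNReal.ofReal (φ (Y x)) * ENNReal.ofReal (ψ x) ∂ℒ
            + ENNReal.ofReal ε * M) + ENNReal.ofReal ε * M := by
            apply add_le_add_left
            calc ∫⁻ x, ENNReal.ofReal (φ' (Y x)) * ENNReal.ofReal (ψ x) ∂ℒ
                ≤ ∫⁻ x, (ENNReal.ofReal (φ (Y x)) * ENNReal.ofReal (ψ x)
                    + ENNReal.ofReal ε * ENNReal.ofReal (ψ x)) ∂ℒ := by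
                  apply lintegral_mono
                  intro x
                  calc ENNReal.ofReal (φ' (Y x)) * ENNReal.ofReal (ψ x)
                      ≤ (ENNReal.ofReal (φ (Y x)) + ENNReal.ofReal ε)
                          * ENNReal.ofReal (ψ x) :=
                        mul_le_mul_left (hdown (Y x)) _
                    _ = _ := by ring
              _ = _ := by
                  rw [lintegral_add_left ((mY hφc).fun_mul (mI hψc)),
                    lintegral_const_mul _ (mI hψc)]
        _ = ∫⁻ x, ENNReal.ofReal (φ (Y x)) * ENNReal.ofReal (ψ x) ∂ℒ
            + ENNReal.ofReal ε * (M + M) := by ring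
  have hS : ∀ φ : α → ℝ, Continuous φ → HasCompactSupport φ → (∀ x, 0 ≤ φ x) →
      ∫⁻ x, ENNReal.ofReal (φ (Y x)) ∂ℒ ≤ ∫⁻ x, ENNReal.ofReal (φ x) * w x ∂ℒ :=
    fun φ hc hs h0 => hB2 φ hc hs h0 (fun ψ' hψ' => hEq2 φ hc hs h0 ψ' hψ')
  -- full extension
  have hEq3 : ∀ φ : α → ℝ, Continuous φ → HasCompactSupport φ → (∀ x, 0 ≤ φ x) →
      ∀ ψ : α → ℝ, Continuous ψ → HasCompactSupport ψ → (∀ x, 0 ≤ ψ x) →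
      ∫⁻ x, ENNReal.ofReal (φ (Y x)) * ENNReal.ofReal (ψ x) ∂ℒ
        = ∫⁻ x, ENNReal.ofReal (φ x) * ENNReal.ofReal (ψ (X x)) * w x ∂ℒ := by
    intro φ hφc hφs hφ0 ψ hψc hψs hψ0
    set M := ∫⁻ x, ENNReal.ofReal (φ x) * w x ∂ℒ with hMdef
    have hMfin : M ≠ ∞ := (hfin2 φ hφc hφs).ne
    have hYfin : ∫⁻ x, ENNReal.ofReal (φ (Y x)) ∂ℒ ≤ M := hS φ hφc hφs hφ0
    have hCne : M + M ≠ ∞ := (ENNReal.add_lt_top.2 ⟨hMfin.lt_top, hMfin.lt_top⟩).ne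
    apply le_antisymm
    · apply le_of_forall_ofReal_eps hCne
      intro ε hε
      obtain ⟨ψ', hψ'𝒞, hψ'⟩ := h𝒞dense ψ hψc hψs hψ0 ε hε
      obtain ⟨hψ'c, hψ's, hψ'0⟩ := h𝒞sub ψ' hψ'𝒞
      have hup : ∀ x, ENNReal.ofReal (ψ x) ≤ ENNReal.ofReal (ψ' x) + ENNReal.ofReal ε :=
        happrox ψ ψ' ε hψ'
      have hdown : ∀ x, ENNReal.ofReal (ψ' x) ≤ ENNReal.ofReal (ψ x) + ENNReal.ofReal ε :=
        happrox ψ' ψ ε (fun x => by rw [abs_sub_comm]; exact hψ' x)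
      calc ∫⁻ x, ENNReal.ofReal (φ (Y x)) * ENNReal.ofReal (ψ x) ∂ℒ
          ≤ ∫⁻ x, (ENNReal.ofReal (φ (Y x)) * ENNReal.ofReal (ψ' x)
              + ENNReal.ofReal ε * ENNReal.ofReal (φ (Y x))) ∂ℒ := by
            apply lintegral_mono
            intro x
            calc ENNReal.ofReal (φ (Y x)) * ENNReal.ofReal (ψ x)
                ≤ ENNReal.ofReal (φ (Y x))
                    * (ENNReal.ofReal (ψ' x) + ENNReal.ofReal ε) :=
                  mul_le_mul_right (hup x) _
              _ = _ := by ring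
        _ = ∫⁻ x, ENNReal.ofReal (φ (Y x)) * ENNReal.ofReal (ψ' x) ∂ℒ
            + ENNReal.ofReal ε * ∫⁻ x, ENNReal.ofReal (φ (Y x)) ∂ℒ := by
            rw [lintegral_add_left ((mY hφc).fun_mul (mI hψ'c)),
              lintegral_const_mul _ (mY hφc)]
        _ ≤ ∫⁻ x, ENNReal.ofReal (φ x) * ENNReal.ofReal (ψ' (X x)) * w x ∂ℒ
            + ENNReal.ofReal ε * M := by
            rw [hEq2 φ hφc hφs hφ0 ψ' hψ'𝒞]
            exact add_le_add_right (mul_le_mul_right hYfin _) _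
        _ ≤ (∫⁻ x, ENNReal.ofReal (φ x) * ENNReal.ofReal (ψ (X x)) * w x ∂ℒ
            + ENNReal.ofReal ε * M) + ENNReal.ofReal ε * M := by
            apply add_le_add_left
            calc ∫⁻ x, ENNReal.ofReal (φ x) * ENNReal.ofReal (ψ' (X x)) * w x ∂ℒ
                ≤ ∫⁻ x, (ENNReal.ofReal (φ x) * ENNReal.ofReal (ψ (X x)) * w x
                    + ENNReal.ofReal ε * (ENNReal.ofReal (φ x) * w x)) ∂ℒ := by
                  apply lintegral_mono
                  intro x
                  calc ENNReal.ofReal (φ x) * ENNReal.ofReal (ψ' (X x)) * w x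
                      ≤ ENNReal.ofReal (φ x)
                          * (ENNReal.ofReal (ψ (X x)) + ENNReal.ofReal ε) * w x := by
                        exact mul_le_mul_left (mul_le_mul_right (hdown (X x)) _) _
                    _ = _ := by ring
              _ = _ := by
                  rw [lintegral_add_left (((mI hφc).fun_mul (mX hψc)).fun_mul hw),
                    lintegral_const_mul _ ((mI hφc).fun_mul hw)]
        _ = ∫⁻ x, ENNReal.ofReal (φ x) * ENNReal.ofReal (ψ (X x)) * w x ∂ℒ
            + ENNReal.ofReal ε * (M + M) := by ring
    · apply le_of_forall_ofReal_eps hCne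
      intro ε hε
      obtain ⟨ψ', hψ'𝒞, hψ'⟩ := h𝒞dense ψ hψc hψs hψ0 ε hε
      obtain ⟨hψ'c, hψ's, hψ'0⟩ := h𝒞sub ψ' hψ'𝒞
      have hup : ∀ x, ENNReal.ofReal (ψ x) ≤ ENNReal.ofReal (ψ' x) + ENNReal.ofReal ε :=
        happrox ψ ψ' ε hψ'
      have hdown : ∀ x, ENNReal.ofReal (ψ' x) ≤ ENNReal.ofReal (ψ x) + ENNReal.ofReal ε :=
        happrox ψ' ψ ε (fun x => by rw [abs_sub_comm]; exact hψ' x)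
      calc ∫⁻ x, ENNReal.ofReal (φ x) * ENNReal.ofReal (ψ (X x)) * w x ∂ℒ
          ≤ ∫⁻ x, (ENNReal.ofReal (φ x) * ENNReal.ofReal (ψ' (X x)) * w x
              + ENNReal.ofReal ε * (ENNReal.ofReal (φ x) * w x)) ∂ℒ := by
            apply lintegral_mono
            intro x
            calc ENNReal.ofReal (φ x) * ENNReal.ofReal (ψ (X x)) * w x
                ≤ ENNReal.ofReal (φ x)
                    * (ENNReal.ofReal (ψ' (X x)) + ENNReal.ofReal ε) * w x :=
                  mul_le_mul_left (mul_le_mul_right (hup (X x)) _) _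
              _ = _ := by ring
        _ = ∫⁻ x, ENNReal.ofReal (φ x) * ENNReal.ofReal (ψ' (X x)) * w x ∂ℒ
            + ENNReal.ofReal ε * M := by
            rw [lintegral_add_left (((mI hφc).fun_mul (mX hψ'c)).fun_mul hw),
              lintegral_const_mul _ ((mI hφc).fun_mul hw)]
        _ = ∫⁻ x, ENNReal.ofReal (φ (Y x)) * ENNReal.ofReal (ψ' x) ∂ℒ
            + ENNReal.ofReal ε * M := by rw [hEq2 φ hφc hφs hφ0 ψ' hψ'𝒞]
        _ ≤ (∫⁻ x, ENNReal.ofReal (φ (Y x)) * ENNReal.ofReal (ψ x) ∂ℒ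
            + ENNReal.ofReal ε * M) + ENNReal.ofReal ε * M := by
            apply add_le_add_left
            calc ∫⁻ x, ENNReal.ofReal (φ (Y x)) * ENNReal.ofReal (ψ' x) ∂ℒ
                ≤ ∫⁻ x, (ENNReal.ofReal (φ (Y x)) * ENNReal.ofReal (ψ x)
                    + ENNReal.ofReal ε * ENNReal.ofReal (φ (Y x))) ∂ℒ := by
                  apply lintegral_mono
                  intro x
                  calc ENNReal.ofReal (φ (Y x)) * ENNReal.ofReal (ψ' x)
                      ≤ ENNReal.ofReal (φ (Y x))
                          * (ENNReal.ofReal (ψ x) + ENNReal.ofReal ε) :=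
                        mul_le_mul_right (hdown x) _
                    _ = _ := by ring
              _ ≤ _ := by
                  rw [lintegral_add_left ((mY hφc).fun_mul (mI hψc)),
                    lintegral_const_mul _ (mY hφc)]
                  exact add_le_add_right (mul_le_mul_right hYfin _) _
        _ = ∫⁻ x, ENNReal.ofReal (φ (Y x)) * ENNReal.ofReal (ψ x) ∂ℒ
            + ENNReal.ofReal ε * (M + M) := by ring
  have hB1full : ∀ ψ : α → ℝ, Continuous ψ → HasCompactSupport ψ → (∀ x, 0 ≤ ψ x) →
      ∫⁻ x, ENNReal.ofReal (ψ (X x)) * w x ∂ℒ ≤ ∫⁻ x, ENNReal.ofReal (ψ x) ∂ℒ := by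
    intro ψ hc hs h0
    refine hB1 ψ hc hs h0 (fun φ' hφ' => ?_)
    obtain ⟨c', s', n'⟩ := h𝒞sub φ' hφ'
    exact hEq3 φ' c' s' n' ψ hc hs h0
  -- disintegrated identity against measurable sets in the first slot
  have hG : ∀ (ψ : α → ℝ), Continuous ψ → HasCompactSupport ψ → (∀ x, 0 ≤ ψ x) →
      ∀ A : Set α, MeasurableSet A →
      ∫⁻ x in Y ⁻¹' A, ENNReal.ofReal (ψ x) ∂ℒ
        = ∫⁻ x in A, ENNReal.ofReal (ψ (X x)) * w x ∂ℒ := by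
    intro ψ hψc hψs hψ0 A hA
    set ν₁ := Measure.map Y (ℒ.withDensity fun x => ENNReal.ofReal (ψ x)) with hν₁
    set ν₂ := ℒ.withDensity (fun x => ENNReal.ofReal (ψ (X x)) * w x) with hν₂
    haveI : IsFiniteMeasure ν₁ := by
      constructor
      rw [hν₁, Measure.map_apply hY MeasurableSet.univ, preimage_univ,
        withDensity_apply _ MeasurableSet.univ, Measure.restrict_univ]
      exact hfin1 ψ hψc hψs
    haveI : IsFiniteMeasure ν₂ := by
      constructor
      rw [hν₂, withDensity_apply _ MeasurableSet.univ, Measure.restrict_univ]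
      exact lt_of_le_of_lt (hB1full ψ hψc hψs hψ0) (hfin1 ψ hψc hψs)
    have hext : ν₁ = ν₂ := by
      apply ext_of_cc
      intro f hfc hfs hf0
      have l1 : ∫⁻ x, ENNReal.ofReal (f x) ∂ν₁
          = ∫⁻ x, ENNReal.ofReal (ψ x) * ENNReal.ofReal (f (Y x)) ∂ℒ := by
        rw [hν₁, lintegral_map (mI hfc) hY,
          lintegral_withDensity_eq_lintegral_mul ℒ (mI hψc) (mY hfc)]
        rfl
      have l2 : ∫⁻ x, ENNReal.ofReal (f x) ∂ν₂
          = ∫⁻ x, (ENNReal.ofReal (ψ (X x)) * w x) * ENNReal.ofReal (f x) ∂ℒ := by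
        rw [hν₂, lintegral_withDensity_eq_lintegral_mul ℒ ((mX hψc).fun_mul hw) (mI hfc)]
        rfl
      rw [l1, l2]
      calc ∫⁻ x, ENNReal.ofReal (ψ x) * ENNReal.ofReal (f (Y x)) ∂ℒ
          = ∫⁻ x, ENNReal.ofReal (f (Y x)) * ENNReal.ofReal (ψ x) ∂ℒ :=
            lintegral_congr fun x => by ring
        _ = ∫⁻ x, ENNReal.ofReal (f x) * ENNReal.ofReal (ψ (X x)) * w x ∂ℒ :=
            hEq3 f hfc hfs hf0 ψ hψc hψs hψ0
        _ = ∫⁻ x, (ENNReal.ofReal (ψ (X x)) * w x) * ENNReal.ofReal (f x) ∂ℒ :=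
            lintegral_congr fun x => by ring
    have h1 : ν₁ A = ∫⁻ x in Y ⁻¹' A, ENNReal.ofReal (ψ x) ∂ℒ := by
      rw [hν₁, Measure.map_apply hY hA, withDensity_apply _ (hY hA)]
    have h2 : ν₂ A = ∫⁻ x in A, ENNReal.ofReal (ψ (X x)) * w x ∂ℒ := by
      rw [hν₂, withDensity_apply _ hA]
    rw [← h1, ← h2, hext]
  -- the pushforward of ℒ under Y is w·ℒ, set version
  have hFmap : ∀ A : Set α, MeasurableSet A → ℒ (Y ⁻¹' A) = ∫⁻ x in A, w x ∂ℒ := by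
    intro A hA
    have h1 : ∀ n : ℕ, ∫⁻ x in Y ⁻¹' A, ENNReal.ofReal (bump n x) ∂ℒ
        = ∫⁻ x in A, ENNReal.ofReal (bump n (X x)) * w x ∂ℒ :=
      fun n => hG (bump n) (bump_continuous n) (bump_hasCompactSupport n) (bump_nonneg n) A hA
    have h2 : ⨆ n, ∫⁻ x in Y ⁻¹' A, ENNReal.ofReal (bump n x) ∂ℒ = ℒ (Y ⁻¹' A) := by
      have h := lintegral_mul_bump_iSup (ℒ.restrict (Y ⁻¹' A)) measurable_id
        (f := fun _ => (1:ℝ≥0∞)) measurable_const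
      simpa [one_mul, setLIntegral_one] using h
    have h3 : ⨆ n, ∫⁻ x in A, ENNReal.ofReal (bump n (X x)) * w x ∂ℒ
        = ∫⁻ x in A, w x ∂ℒ := by
      have h := lintegral_mul_bump_iSup (ℒ.restrict A) hX (f := w) hw
      rw [← h]
      exact iSup_congr fun n => lintegral_congr fun x => by ring
    rw [← h2, ← h3]
    exact iSup_congr h1
  -- rectangle identity, bounded first factor
  have hRectBdd : ∀ (A B : Set α), MeasurableSet A → MeasurableSet B →
      (∃ n : ℕ, A ⊆ closedBall 0 n) →
      ℒ (B ∩ Y ⁻¹' A) = (ℒ.withDensity w) (X ⁻¹' B ∩ A) := by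
    rintro A B hA hB ⟨n, hAn⟩
    have hAfin : ∫⁻ x in A, w x ∂ℒ < ∞ :=
      lt_of_le_of_lt (lintegral_mono_set hAn) (hwfin _ (isCompact_closedBall _ _))
    set κ₁ := ℒ.restrict (Y ⁻¹' A) with hκ₁
    set κ₂ := Measure.map X ((ℒ.withDensity w).restrict A) with hκ₂
    haveI : IsFiniteMeasure κ₁ := by
      constructor
      rw [hκ₁, Measure.restrict_apply_univ, hFmap A hA]
      exact hAfin
    haveI : IsFiniteMeasure κ₂ := by
      constructor
      rw [hκ₂, Measure.map_apply hX MeasurableSet.univ, preimage_univ,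
        Measure.restrict_apply_univ, withDensity_apply _ hA]
      exact hAfin
    have hext : κ₁ = κ₂ := by
      apply ext_of_cc
      intro f hfc hfs hf0
      have l2 : ∫⁻ x, ENNReal.ofReal (f x) ∂κ₂
          = ∫⁻ x in A, ENNReal.ofReal (f (X x)) * w x ∂ℒ := by
        rw [hκ₂, lintegral_map (mI hfc) hX, restrict_withDensity hA,
          lintegral_withDensity_eq_lintegral_mul _ hw (mX hfc)]
        exact lintegral_congr fun x => by simp only [Pi.mul_apply]; ring
      rw [hκ₁, l2]
      exact hG f hfc hfs hf0 A hA
    have e1 : κ₁ B = ℒ (B ∩ Y ⁻¹' A) := Measure.restrict_apply hB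
    have e2 : κ₂ B = (ℒ.withDensity w) (X ⁻¹' B ∩ A) := by
      rw [hκ₂, Measure.map_apply hX hB, Measure.restrict_apply (hX hB)]
    rw [← e1, ← e2, hext]
  -- rectangle identity, general
  have hRect : ∀ (A B : Set α), MeasurableSet A → MeasurableSet B →
      ℒ (B ∩ Y ⁻¹' A) = (ℒ.withDensity w) (X ⁻¹' B ∩ A) := by
    intro A B hA hB
    set An : ℕ → Set α := fun n => A ∩ closedBall 0 n with hAndef
    have hAnm : ∀ n, MeasurableSet (An n) := fun n => hA.inter measurableSet_closedBall
    have hAnmono : Monotone An := by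
      intro n m hnm
      apply inter_subset_inter_right
      exact closedBall_subset_closedBall (Nat.cast_le.2 hnm)
    have hAnU : (⋃ n, An n) = A := by
      ext x
      simp only [hAndef, mem_iUnion, mem_inter_iff, mem_closedBall, dist_zero_right]
      constructor
      · rintro ⟨n, hx, _⟩; exact hx
      · intro hx
        obtain ⟨n, hn⟩ := exists_nat_ge ‖x‖
        exact ⟨n, hx, hn⟩
    have hU1 : (⋃ n, B ∩ Y ⁻¹' (An n)) = B ∩ Y ⁻¹' A := by
      rw [← inter_iUnion, ← preimage_iUnion, hAnU]
    have hU2 : (⋃ n, X ⁻¹' B ∩ An n) = X ⁻¹' B ∩ A := by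
      rw [← inter_iUnion, hAnU]
    have hd1 : Directed (· ⊆ ·) fun n => B ∩ Y ⁻¹' (An n) := by
      apply Monotone.directed_le
      intro n m hnm
      exact inter_subset_inter_right _ (preimage_mono (hAnmono hnm))
    have hd2 : Directed (· ⊆ ·) fun n => X ⁻¹' B ∩ An n := by
      apply Monotone.directed_le
      intro n m hnm
      exact inter_subset_inter_right _ (hAnmono hnm)
    rw [← hU1, ← hU2, hd1.measure_iUnion, hd2.measure_iUnion]
    exact iSup_congr fun n => hRectBdd (An n) B (hAnm n) hB ⟨n, inter_subset_right⟩
  -- conclude by the π-system argument on the product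
  have hm1 : Measurable fun v : α => (Y v, v) := hY.prodMk measurable_id
  have hm2 : Measurable fun u : α => (u, X u) := measurable_id.prodMk hX
  apply Measure.ext_of_generateFrom_of_iUnion
    (image2 (· ×ˢ ·) {s : Set α | MeasurableSet s} {t : Set α | MeasurableSet t})
    (fun n : ℕ => closedBall 0 n ×ˢ closedBall 0 n)
    generateFrom_prod.symm isPiSystem_prod
  · ext p
    simp only [mem_iUnion, mem_prod, mem_closedBall, dist_zero_right, mem_univ, iff_true]
    obtain ⟨n, hn⟩ := exists_nat_ge (max ‖p.1‖ ‖p.2‖)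
    exact ⟨n, (le_max_left _ _).trans hn, (le_max_right _ _).trans hn⟩
  · intro n
    exact mem_image2_of_mem measurableSet_closedBall measurableSet_closedBall
  · intro n
    rw [Measure.map_apply hm1
      (measurableSet_closedBall.prod measurableSet_closedBall), mk_preimage_prod]
    exact (lt_of_le_of_lt (measure_mono (inter_subset_right.trans (subset_refl _)))
      ((isCompact_closedBall _ _).measure_lt_top)).ne
  · rintro s ⟨A, hA, B, hB, rfl⟩
    show (Measure.map (fun v => (Y v, v)) ℒ) (A ×ˢ B)
        = (Measure.map (fun u => (u, X u)) (ℒ.withDensity w)) (A ×ˢ B)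
    rw [Measure.map_apply hm1 ((hA : MeasurableSet A).prod hB),
      Measure.map_apply hm2 ((hA : MeasurableSet A).prod hB),
      mk_preimage_prod, mk_preimage_prod]
    simp only [preimage_id']
    rw [inter_comm (Y ⁻¹' A) B, inter_comm A (X ⁻¹' B)]
    exact hRect A B hA hB


end Stmt1Aux

open Stmt1Aux

/-- If `X, Y : ℝ^d → ℝ^d` are Borel measurable, `ρ > 0` is Borel measurable and
locally integrable, and `∫ φ(Y x) ψ x dx = ∫ φ x ψ(X x) ρ x dx` for all `φ, ψ` in a countable
subset `𝒞` of the nonnegative continuous compactly supported functions which is dense in that set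
for the uniform norm, then `X ∘ Y = id` and `Y ∘ X = id` Lebesgue-a.e., and the image of Lebesgue
measure under `Y` is `ρ·ℒ`. -/
theorem stmt1 {d : ℕ}
    (X Y : EuclideanSpace ℝ (Fin d) → EuclideanSpace ℝ (Fin d))
    (hX : Measurable X) (hY : Measurable Y)
    (ρ : EuclideanSpace ℝ (Fin d) → ℝ) (hρmeas : Measurable ρ) (hρpos : ∀ x, 0 < ρ x)
    (hρloc : LocallyIntegrable ρ (volume : Measure (EuclideanSpace ℝ (Fin d))))
    (𝒞 : Set (EuclideanSpace ℝ (Fin d) → ℝ)) (h𝒞count : 𝒞.Countable)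
    (h𝒞sub : ∀ φ ∈ 𝒞, Continuous φ ∧ HasCompactSupport φ ∧ ∀ x, 0 ≤ φ x)
    (h𝒞dense : ∀ φ : EuclideanSpace ℝ (Fin d) → ℝ,
      Continuous φ → HasCompactSupport φ → (∀ x, 0 ≤ φ x) →
      ∀ ε > 0, ∃ ψ ∈ 𝒞, ∀ x, |φ x - ψ x| ≤ ε)
    (hEq : ∀ φ ∈ 𝒞, ∀ ψ ∈ 𝒞, ∫ x, φ (Y x) * ψ x = ∫ x, φ x * ψ (X x) * ρ x) :
    (∀ᵐ x ∂(volume : Measure (EuclideanSpace ℝ (Fin d))), X (Y x) = x ∧ Y (X x) = x) ∧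
    (∀ φ : EuclideanSpace ℝ (Fin d) → ℝ≥0∞, Measurable φ →
      ∫⁻ x, φ (Y x) = ∫⁻ x, φ x * ENNReal.ofReal (ρ x)) := by
  set w : EuclideanSpace ℝ (Fin d) → ℝ≥0∞ := fun x => ENNReal.ofReal (ρ x) with hwdef
  have hw : Measurable w := hρmeas.ennreal_ofReal
  have hwfin : ∀ K : Set (EuclideanSpace ℝ (Fin d)), IsCompact K → ∫⁻ x in K, w x ∂(volume) < ∞ := by
    intro K hK
    have h1 : IntegrableOn ρ K volume := hρloc.integrableOn_isCompact hK
    exact h1.lintegral_lt_top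
  -- convert the hypothesis into a `lintegral` identity
  have hEqL : ∀ φ ∈ 𝒞, ∀ ψ ∈ 𝒞,
      ∫⁻ x, ENNReal.ofReal (φ (Y x)) * ENNReal.ofReal (ψ x)
        = ∫⁻ x, ENNReal.ofReal (φ x) * ENNReal.ofReal (ψ (X x)) * w x := by
    intro φ hφ ψ hψ
    obtain ⟨hφc, hφs, hφ0⟩ := h𝒞sub φ hφ
    obtain ⟨hψc, hψs, hψ0⟩ := h𝒞sub ψ hψ
    obtain ⟨Cφ, hCφ0, hCφ⟩ := cc_bound hφc hφs
    obtain ⟨Cψ, hCψ0, hCψ⟩ := cc_bound hψc hψs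
    have hfinL : ∫⁻ x, ENNReal.ofReal (φ (Y x)) * ENNReal.ofReal (ψ x) < ∞ := by
      calc ∫⁻ x, ENNReal.ofReal (φ (Y x)) * ENNReal.ofReal (ψ x)
          ≤ ∫⁻ x, ENNReal.ofReal Cφ * ENNReal.ofReal (ψ x) :=
            lintegral_mono fun x =>
              mul_le_mul_left (ENNReal.ofReal_le_ofReal (hCφ (Y x))) _
        _ = ENNReal.ofReal Cφ * ∫⁻ x, ENNReal.ofReal (ψ x) :=
            lintegral_const_mul _ hψc.measurable.ennreal_ofReal
        _ < ∞ := ENNReal.mul_lt_top ENNReal.ofReal_lt_top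
            (hψc.integrable_of_hasCompactSupport hψs).lintegral_lt_top
    have hfinR : ∫⁻ x, ENNReal.ofReal (φ x) * ENNReal.ofReal (ψ (X x)) * w x < ∞ := by
      calc ∫⁻ x, ENNReal.ofReal (φ x) * ENNReal.ofReal (ψ (X x)) * w x
          ≤ ∫⁻ x, ENNReal.ofReal Cψ * (ENNReal.ofReal (φ x) * w x) := by
            apply lintegral_mono
            intro x
            calc ENNReal.ofReal (φ x) * ENNReal.ofReal (ψ (X x)) * w x
                = ENNReal.ofReal (ψ (X x)) * (ENNReal.ofReal (φ x) * w x) := by ring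
              _ ≤ ENNReal.ofReal Cψ * (ENNReal.ofReal (φ x) * w x) :=
                  mul_le_mul_left (ENNReal.ofReal_le_ofReal (hCψ (X x))) _
        _ = ENNReal.ofReal Cψ * ∫⁻ x, ENNReal.ofReal (φ x) * w x :=
            lintegral_const_mul _ (hφc.measurable.ennreal_ofReal.fun_mul hw)
        _ < ∞ := ENNReal.mul_lt_top ENNReal.ofReal_lt_top
            (lintegral_cc_mul_fin volume hw hwfin hφc hφs)
    have e1 : ∫ x, φ (Y x) * ψ x
        = (∫⁻ x, ENNReal.ofReal (φ (Y x)) * ENNReal.ofReal (ψ x)).toReal := by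
      rw [integral_eq_lintegral_of_nonneg_ae
        (Filter.Eventually.of_forall fun x => mul_nonneg (hφ0 (Y x)) (hψ0 x))
        (((hφc.measurable.comp hY).mul hψc.measurable).aestronglyMeasurable)]
      congr 1
      exact lintegral_congr fun x => ENNReal.ofReal_mul (hφ0 (Y x))
    have e2 : ∫ x, φ x * ψ (X x) * ρ x
        = (∫⁻ x, ENNReal.ofReal (φ x) * ENNReal.ofReal (ψ (X x)) * w x).toReal := by
      rw [integral_eq_lintegral_of_nonneg_ae
        (Filter.Eventually.of_forall fun x =>
          mul_nonneg (mul_nonneg (hφ0 x) (hψ0 (X x))) (hρpos x).le)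
        (((hφc.measurable.fun_mul (hψc.measurable.comp hX)).mul hρmeas).aestronglyMeasurable)]
      congr 1
      refine lintegral_congr fun x => ?_
      rw [ENNReal.ofReal_mul (mul_nonneg (hφ0 x) (hψ0 (X x))),
        ENNReal.ofReal_mul (hφ0 x)]
    have h := hEq φ hφ ψ hψ
    rw [e1, e2] at h
    exact (ENNReal.toReal_eq_toReal_iff' hfinL.ne hfinR.ne).1 h
  -- the product-measure identity
  have hππ := master (volume : Measure (EuclideanSpace ℝ (Fin d))) X Y hX hY w hw hwfin 𝒞 h𝒞sub h𝒞dense hEqL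
  have hm1 : Measurable fun v : EuclideanSpace ℝ (Fin d) => (Y v, v) := hY.prodMk measurable_id
  have hm2 : Measurable fun u : EuclideanSpace ℝ (Fin d) => (u, X u) := measurable_id.prodMk hX
  constructor
  · -- a.e. inverse properties
    have hGset : MeasurableSet {p : EuclideanSpace ℝ (Fin d) × EuclideanSpace ℝ (Fin d) | p.2 = X p.1} :=
      measurableSet_eq_fun measurable_snd (hX.comp measurable_fst)
    have hHset : MeasurableSet {p : EuclideanSpace ℝ (Fin d) × EuclideanSpace ℝ (Fin d) | p.1 = Y p.2} :=
      measurableSet_eq_fun measurable_fst (hY.comp measurable_snd)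
    have hXY : ∀ᵐ x ∂(volume : Measure (EuclideanSpace ℝ (Fin d))), X (Y x) = x := by
      rw [ae_iff]
      have c1 : volume {x : EuclideanSpace ℝ (Fin d) | ¬ X (Y x) = x}
          = (Measure.map (fun v : EuclideanSpace ℝ (Fin d) => (Y v, v)) volume) {p : EuclideanSpace ℝ (Fin d) × EuclideanSpace ℝ (Fin d) | p.2 = X p.1}ᶜ := by
        rw [Measure.map_apply hm1 hGset.compl]
        congr 1
        ext x
        simp only [mem_setOf_eq, preimage_compl, mem_compl_iff, mem_preimage]
        rw [eq_comm]
      have c2 : (Measure.map (fun u : EuclideanSpace ℝ (Fin d) => (u, X u)) (volume.withDensity w))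
          {p : EuclideanSpace ℝ (Fin d) × EuclideanSpace ℝ (Fin d) | p.2 = X p.1}ᶜ = 0 := by
        rw [Measure.map_apply hm2 hGset.compl]
        convert measure_empty (μ := volume.withDensity w)
        ext u
        simp
      rw [c1, hππ, c2]
    have hYX : ∀ᵐ x ∂(volume : Measure (EuclideanSpace ℝ (Fin d))), Y (X x) = x := by
      rw [ae_iff]
      set S : Set (EuclideanSpace ℝ (Fin d)) := {x : EuclideanSpace ℝ (Fin d) | ¬ Y (X x) = x} with hSdef
      have hSm : MeasurableSet S := by
        have : MeasurableSet {x : EuclideanSpace ℝ (Fin d) | Y (X x) = x} :=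
          measurableSet_eq_fun (hY.comp hX) measurable_id
        exact this.compl
      have c1 : (Measure.map (fun v : EuclideanSpace ℝ (Fin d) => (Y v, v)) volume)
          {p : EuclideanSpace ℝ (Fin d) × EuclideanSpace ℝ (Fin d) | p.1 = Y p.2}ᶜ = 0 := by
        rw [Measure.map_apply hm1 hHset.compl]
        convert measure_empty (μ := volume)
        ext v
        simp
      have c2 : (Measure.map (fun u : EuclideanSpace ℝ (Fin d) => (u, X u)) (volume.withDensity w))
          {p : EuclideanSpace ℝ (Fin d) × EuclideanSpace ℝ (Fin d) | p.1 = Y p.2}ᶜ = (volume.withDensity w) S := by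
        rw [Measure.map_apply hm2 hHset.compl]
        congr 1
        ext u
        simp only [hSdef, mem_setOf_eq, preimage_compl, mem_compl_iff, mem_preimage]
        rw [eq_comm]
      have hμS : (volume.withDensity w) S = 0 := by
        rw [← c2, ← hππ, c1]
      -- since w > 0 everywhere, S is Lebesgue-null
      rw [withDensity_apply _ hSm] at hμS
      have hae : w =ᵐ[(volume : Measure (EuclideanSpace ℝ (Fin d))).restrict S] 0 :=
        (lintegral_eq_zero_iff hw).1 hμS
      have hset : {x : EuclideanSpace ℝ (Fin d) | ¬ w x = 0} = univ := by
        ext x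
        simp only [mem_setOf_eq, mem_univ, iff_true]
        intro h0
        rw [hwdef] at h0
        simp only [ENNReal.ofReal_eq_zero] at h0
        exact absurd h0 (not_le.2 (hρpos x))
      have := hae
      rw [Filter.EventuallyEq, ae_iff] at this
      simpa [hset, Measure.restrict_apply_univ] using this
    filter_upwards [hXY, hYX] with x h1 h2
    exact ⟨h1, h2⟩
  · -- the pushforward identity
    have hmapY : Measure.map Y (volume : Measure (EuclideanSpace ℝ (Fin d))) = volume.withDensity w := by
      have h := congrArg (Measure.map Prod.fst) hππ
      rwa [Measure.map_map measurable_fst hm1, Measure.map_map measurable_fst hm2,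
        (show Prod.fst ∘ (fun v : EuclideanSpace ℝ (Fin d) => (Y v, v)) = Y from rfl),
        (show Prod.fst ∘ (fun u : EuclideanSpace ℝ (Fin d) => (u, X u)) = id from rfl), Measure.map_id] at h
    intro φ hφ
    calc ∫⁻ x, φ (Y x) = ∫⁻ x, φ x ∂(Measure.map Y (volume : Measure (EuclideanSpace ℝ (Fin d)))) :=
          (lintegral_map hφ hY).symm
      _ = ∫⁻ x, φ x ∂(volume.withDensity w) := by rw [hmapY]
      _ = ∫⁻ x, (w * φ) x := lintegral_withDensity_eq_lintegral_mul volume hw hφ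
      _ = ∫⁻ x, φ x * w x := lintegral_congr fun x => by
          simp only [Pi.mul_apply]; ring
end

section
/- Let 𝔹 be a separable and uniformly convex Banach space, T > 0, and (Ω,ℱ,P) a probability space. Let (u_n)_{n∈ℕ} be a sequence of measurable maps u_n : Ω → C([0,T];𝔹) with sup_n E[sup_{t∈[0,T]} ‖u_n(t)‖_𝔹] < ∞, and let u : Ω → C([0,T];𝔹) be measurable with E[sup_{t∈[0,T]} ‖u(t)‖_𝔹] < ∞. Assume that (i) for every φ in the dual space 𝔹*, lim_{n→∞} E[sup_{t∈[0,T]} |⟨φ, u_n(t) − u(t)⟩|] = 0, and (ii) lim_{n→∞} E[sup_{t∈[0,T]} |‖u_n(t)‖_𝔹 − ‖u(t)‖_𝔹|] = 0. Then sup_{t∈[0,T]} ‖u_n(t) − u(t)‖_𝔹 converges to zero in probability as n → ∞, i.e. for every ε > 0, P(sup_{t∈[0,T]} ‖u_n(t) − u(t)‖_𝔹 > ε) → 0. -/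
open MeasureTheory Filter Topology Set
open scoped ENNReal NNReal

open MeasureTheory Filter Topology Set
open scoped ENNReal NNReal

lemma bddAbove_range_of_compact {K : Type*} [TopologicalSpace K] [CompactSpace K]
    {g : K → ℝ} (hg : Continuous g) : BddAbove (Set.range g) :=
  (isCompact_range hg).bddAbove

lemma exists_norming_family (B : Type*) [NormedAddCommGroup B] [NormedSpace ℝ B]
    [TopologicalSpace.SeparableSpace B] :
    ∃ φ : ℕ → StrongDual ℝ B, (∀ k, ‖φ k‖ ≤ 1) ∧
      ∀ x : B, ∀ c < ‖x‖, ∃ k, c < φ k x := by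
  obtain ⟨d, hd⟩ := TopologicalSpace.exists_dense_seq B
  have h := fun k => exists_dual_vector'' ℝ (d k)
  choose φ hφ1 hφ2 using h
  refine ⟨φ, hφ1, fun x c hc => ?_⟩
  have : x ∈ closure (Set.range d) := hd x
  rw [Metric.mem_closure_iff] at this
  obtain ⟨_, ⟨k, rfl⟩, hk⟩ := this ((‖x‖ - c) / 2) (by linarith)
  refine ⟨k, ?_⟩
  have h1 : φ k (d k) = ‖d k‖ := by simpa using hφ2 k
  have h2 : |φ k x - φ k (d k)| ≤ ‖x - d k‖ := by
    calc |φ k x - φ k (d k)| = ‖φ k (x - d k)‖ := by rw [← map_sub]; rfl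
    _ ≤ ‖φ k‖ * ‖x - d k‖ := (φ k).le_opNorm _
    _ ≤ 1 * ‖x - d k‖ := by gcongr; exact hφ1 k
    _ = ‖x - d k‖ := one_mul _
  have h3 : ‖x‖ - ‖d k‖ ≤ ‖x - d k‖ := norm_sub_norm_le x (d k)
  have h4 : ‖x - d k‖ < (‖x‖ - c) / 2 := by rwa [dist_eq_norm] at hk
  have := abs_le.mp h2
  linarith [this.1]

lemma radon_riesz {B : Type*} [NormedAddCommGroup B] [NormedSpace ℝ B] [UniformConvexSpace B]
    {φ : ℕ → StrongDual ℝ B} (hφ1 : ∀ k, ‖φ k‖ ≤ 1)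
    (hφ2 : ∀ x : B, ∀ c < ‖x‖, ∃ k, c < φ k x)
    {x : ℕ → B} {y : B}
    (hw : ∀ k, Tendsto (fun n => φ k (x n)) atTop (𝓝 (φ k y)))
    (hn : Tendsto (fun n => ‖x n‖) atTop (𝓝 ‖y‖)) :
    Tendsto x atTop (𝓝 y) := by
  by_cases hy : y = 0
  · subst hy
    rw [← tendsto_sub_nhds_zero_iff]
    simpa using (tendsto_zero_iff_norm_tendsto_zero (E := B)).2 (by simpa using hn)
  have hr : (0:ℝ) < ‖y‖ := norm_pos_iff.mpr hy
  set r := ‖y‖ with hrdef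
  by_contra hcon
  rw [Metric.tendsto_atTop] at hcon
  push_neg at hcon
  obtain ⟨ε, hε, hfreq⟩ := hcon
  set ε₀ : ℝ := min (ε / (2 * r)) 1 with hε₀def
  have hε₀ : 0 < ε₀ := lt_min (by positivity) one_pos
  obtain ⟨δ, hδ, hconv⟩ := exists_forall_closed_ball_dist_add_le_two_sub B hε₀
  obtain ⟨k, hk⟩ := hφ2 y (r - r * δ / 2) (by nlinarith)
  -- limit sequences
  have hninv : Tendsto (fun n => ‖x n‖⁻¹) atTop (𝓝 r⁻¹) := hn.inv₀ hr.ne'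
  have hg : Tendsto (fun n => ‖x n‖⁻¹ * φ k (x n) + r⁻¹ * φ k y) atTop
      (𝓝 (r⁻¹ * φ k y + r⁻¹ * φ k y)) := ((hninv.mul (hw k)).add tendsto_const_nhds)
  have hh : Tendsto (fun n => ‖x n‖⁻¹ * ε - |‖x n‖⁻¹ - r⁻¹| * r) atTop
      (𝓝 (r⁻¹ * ε - |r⁻¹ - r⁻¹| * r)) := by
    exact (hninv.mul tendsto_const_nhds).sub
      ((((hninv.sub tendsto_const_nhds).abs).mul tendsto_const_nhds))
  have hglim : 2 - δ < r⁻¹ * φ k y + r⁻¹ * φ k y := by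
    have h2 : r⁻¹ * (r - r * δ / 2) < r⁻¹ * φ k y :=
      mul_lt_mul_of_pos_left hk (inv_pos.mpr hr)
    have h3 : r⁻¹ * (r - r * δ / 2) = 1 - δ / 2 := by field_simp
    rw [h3] at h2
    linarith
  have hhlim : ε₀ < r⁻¹ * ε - |r⁻¹ - r⁻¹| * r := by
    simp only [sub_self, abs_zero, zero_mul, sub_zero]
    calc ε₀ ≤ ε / (2 * r) := min_le_left _ _
    _ < ε / r := by apply div_lt_div_of_pos_left hε hr; linarith
    _ = r⁻¹ * ε := by rw [div_eq_inv_mul]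
  have E1 := hg.eventually (lt_mem_nhds hglim)
  have E2 := hh.eventually (lt_mem_nhds hhlim)
  have E3 := hn.eventually (lt_mem_nhds hr)
  obtain ⟨N, hN⟩ := eventually_atTop.mp (E1.and (E2.and E3))
  obtain ⟨n, hnN, hdist⟩ := hfreq N
  obtain ⟨e1, e2, e3⟩ := hN n hnN
  have hxn : (0:ℝ) < ‖x n‖ := e3
  set a := ‖x n‖⁻¹ • x n with ha
  set b := r⁻¹ • y with hb
  have hna : ‖a‖ = 1 := by
    rw [ha, norm_smul, norm_inv, norm_norm, inv_mul_cancel₀ hxn.ne']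
  have hnb : ‖b‖ = 1 := by
    rw [hb, norm_smul, norm_inv, Real.norm_eq_abs, abs_of_pos hr, inv_mul_cancel₀ hr.ne']
  have hdecomp : a - b = ‖x n‖⁻¹ • (x n - y) + (‖x n‖⁻¹ - r⁻¹) • y := by
    rw [smul_sub, sub_smul]; abel
  have hab : ε₀ ≤ ‖a - b‖ := by
    have h1 : ‖‖x n‖⁻¹ • (x n - y)‖ = ‖x n‖⁻¹ * ‖x n - y‖ := by
      rw [norm_smul, norm_inv, norm_norm]
    have h2 : ‖(‖x n‖⁻¹ - r⁻¹) • y‖ = |‖x n‖⁻¹ - r⁻¹| * r := by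
      rw [norm_smul, Real.norm_eq_abs]
    have h3 : ‖‖x n‖⁻¹ • (x n - y)‖ - ‖(‖x n‖⁻¹ - r⁻¹) • y‖ ≤ ‖a - b‖ := by
      rw [hdecomp]
      have := norm_add_le (‖x n‖⁻¹ • (x n - y) + (‖x n‖⁻¹ - r⁻¹) • y) (-(‖x n‖⁻¹ - r⁻¹) • y)
      simp only [add_neg_cancel_right, neg_smul, norm_neg] at this
      linarith [this]
    have h4 : ε ≤ ‖x n - y‖ := by rwa [dist_eq_norm] at hdist
    have h5 : ‖x n‖⁻¹ * ε ≤ ‖x n‖⁻¹ * ‖x n - y‖ := by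
      apply mul_le_mul_of_nonneg_left h4 (by positivity)
    rw [h1, h2] at h3
    linarith [e2.le]
  have huc : ‖a + b‖ ≤ 2 - δ := hconv hna.le hnb.le hab
  have hφab : φ k (a + b) = ‖x n‖⁻¹ * φ k (x n) + r⁻¹ * φ k y := by
    rw [map_add]; simp [ha, hb, _root_.map_smul, smul_eq_mul]
  have : φ k (a + b) ≤ ‖a + b‖ := by
    calc φ k (a + b) ≤ |φ k (a + b)| := le_abs_self _
    _ = ‖φ k (a + b)‖ := rfl
    _ ≤ ‖φ k‖ * ‖a + b‖ := (φ k).le_opNorm _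
    _ ≤ 1 * ‖a + b‖ := by gcongr; exact hφ1 k
    _ = ‖a + b‖ := one_mul _
  rw [hφab] at this
  linarith

lemma ciSup_dense {K : Type*} [TopologicalSpace K] [CompactSpace K] [Nonempty K]
    {g : K → ℝ} (hg : Continuous g) {d : ℕ → K} (hd : DenseRange d) :
    ⨆ t, g t = ⨆ i, g (d i) := by
  have hb : BddAbove (Set.range g) := (isCompact_range hg).bddAbove
  have hb2 : BddAbove (Set.range fun i => g (d i)) := by
    apply hb.mono; rintro _ ⟨i, rfl⟩; exact ⟨d i, rfl⟩
  apply le_antisymm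
  · refine ciSup_le fun t => ?_
    have h1 : g t ∈ closure (Set.range fun i => g (d i)) := by
      refine map_mem_closure hg (hd t) ?_
      rintro _ ⟨i, rfl⟩; exact ⟨i, rfl⟩
    have h2 : closure (Set.range fun i => g (d i)) ⊆ Set.Iic (⨆ i, g (d i)) :=
      closure_minimal (fun v hv => le_csSup hb2 hv) isClosed_Iic
    exact h2 h1
  · exact ciSup_le fun i => le_ciSup hb (d i)

lemma meas_sup {Ω K : Type*} [MeasurableSpace Ω] [TopologicalSpace K] [CompactSpace K]
    [Nonempty K] {d : ℕ → K} (hd : DenseRange d)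
    {F : Ω → K → ℝ} (hc : ∀ ω, Continuous (F ω)) (hm : ∀ i, Measurable fun ω => F ω (d i)) :
    Measurable fun ω => ⨆ t, F ω t := by
  have : (fun ω => ⨆ t, F ω t) = fun ω => ⨆ i, F ω (d i) :=
    funext fun ω => ciSup_dense (hc ω) hd
  rw [this]; exact Measurable.iSup hm

lemma det_lemma {B : Type*} [NormedAddCommGroup B] [NormedSpace ℝ B] [UniformConvexSpace B]
    {K : Type*} [MetricSpace K] [CompactSpace K] [Nonempty K]
    {φ : ℕ → StrongDual ℝ B} (hφ1 : ∀ k, ‖φ k‖ ≤ 1)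
    (hφ2 : ∀ x : B, ∀ c < ‖x‖, ∃ k, c < φ k x)
    (radon_riesz : ∀ {x : ℕ → B} {y : B},
      (∀ k, Tendsto (fun n => φ k (x n)) atTop (𝓝 (φ k y))) →
      Tendsto (fun n => ‖x n‖) atTop (𝓝 ‖y‖) → Tendsto x atTop (𝓝 y))
    {f : ℕ → C(K, B)} {f0 : C(K, B)}
    (hA : ∀ k, Tendsto (fun n => ⨆ t, |φ k (f n t) - φ k (f0 t)|) atTop (𝓝 0))
    (hB : Tendsto (fun n => ⨆ t, |‖f n t‖ - ‖f0 t‖|) atTop (𝓝 0)) :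
    Tendsto (fun n => ⨆ t, ‖f n t - f0 t‖) atTop (𝓝 0) := by
  by_contra hcon
  rw [Metric.tendsto_atTop] at hcon
  push_neg at hcon
  obtain ⟨ε, hε, hfreq⟩ := hcon
  -- continuity helpers
  have contX : ∀ n, Continuous fun t => ‖f n t - f0 t‖ :=
    fun n => ((f n).continuous.sub f0.continuous).norm
  have contA : ∀ k n, Continuous fun t => |φ k (f n t) - φ k (f0 t)| :=
    fun k n => (((φ k).continuous.comp (f n).continuous).sub
      ((φ k).continuous.comp f0.continuous)).abs
  have contB : ∀ n, Continuous fun t => |‖f n t‖ - ‖f0 t‖| :=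
    fun n => ((f n).continuous.norm.sub f0.continuous.norm).abs
  -- for frequently many n, ε ≤ sup; sup attained
  have hfreq' : ∃ᶠ n in atTop, ∃ t : K, ε ≤ ‖f n t - f0 t‖ := by
    rw [frequently_atTop]
    intro N
    obtain ⟨n, hnN, hdist⟩ := hfreq N
    refine ⟨n, hnN, ?_⟩
    have hd : ε ≤ |⨆ t, ‖f n t - f0 t‖| := by rwa [Real.dist_0_eq_abs] at hdist
    obtain ⟨t0, -, ht0⟩ := (isCompact_univ : IsCompact (Set.univ : Set K)).exists_isMaxOn
      Set.univ_nonempty (contX n).continuousOn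
    refine ⟨t0, ?_⟩
    have hsup : (⨆ t, ‖f n t - f0 t‖) ≤ ‖f n t0 - f0 t0‖ :=
      ciSup_le fun t => ht0 (Set.mem_univ t)
    have habs : |⨆ t, ‖f n t - f0 t‖| = ⨆ t, ‖f n t - f0 t‖ := by
      have h0 : ‖f n (Classical.arbitrary K) - f0 (Classical.arbitrary K)‖ ≤
          ⨆ t, ‖f n t - f0 t‖ :=
        le_ciSup (isCompact_range (contX n)).bddAbove (Classical.arbitrary K)
      exact abs_of_nonneg (le_trans (norm_nonneg _) h0)
    rw [habs] at hd
    linarith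
  obtain ⟨ns, hns, hprop⟩ := Filter.extraction_of_frequently_atTop hfreq'
  choose τ hτ using hprop
  obtain ⟨t0, -, ms, hms, hconvt⟩ := isCompact_univ.tendsto_subseq (fun i => mem_univ (τ i))
  set g : ℕ → ℕ := ns ∘ ms with hgdef
  have hgmono : StrictMono g := hns.comp hms
  set σ : ℕ → K := fun i => τ (ms i) with hσdef
  have hσt : Tendsto σ atTop (𝓝 t0) := hconvt
  set x : ℕ → B := fun i => f (g i) (σ i) with hxdef
  set y : B := f0 t0 with hydef
  -- weak convergence
  have hw : ∀ k, Tendsto (fun i => φ k (x i)) atTop (𝓝 (φ k y)) := by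
    intro k
    rw [← tendsto_sub_nhds_zero_iff]
    have hbound : ∀ i, ‖φ k (x i) - φ k y‖ ≤
        (⨆ t, |φ k (f (g i) t) - φ k (f0 t)|) + |φ k (f0 (σ i)) - φ k y| := by
      intro i
      have h1 : |φ k (x i) - φ k (f0 (σ i))| ≤ ⨆ t, |φ k (f (g i) t) - φ k (f0 t)| :=
        le_ciSup (isCompact_range (contA k (g i))).bddAbove (σ i)
      calc ‖φ k (x i) - φ k y‖ = |φ k (x i) - φ k y| := rfl
      _ ≤ |φ k (x i) - φ k (f0 (σ i))| + |φ k (f0 (σ i)) - φ k y| := abs_sub_le _ _ _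
      _ ≤ _ := by gcongr
    refine squeeze_zero_norm hbound ?_
    have h2 : Tendsto (fun i => ⨆ t, |φ k (f (g i) t) - φ k (f0 t)|) atTop (𝓝 0) :=
      (hA k).comp hgmono.tendsto_atTop
    have h3 : Tendsto (fun i => |φ k (f0 (σ i)) - φ k y|) atTop (𝓝 0) := by
      have : Tendsto (fun i => φ k (f0 (σ i))) atTop (𝓝 (φ k y)) :=
        (((φ k).continuous.comp f0.continuous).tendsto t0).comp hσt
      have := (tendsto_sub_nhds_zero_iff.mpr this).abs
      simpa using this
    simpa using h2.add h3
  -- norm convergence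
  have hn : Tendsto (fun i => ‖x i‖) atTop (𝓝 ‖y‖) := by
    rw [← tendsto_sub_nhds_zero_iff]
    have hbound : ∀ i, ‖‖x i‖ - ‖y‖‖ ≤
        (⨆ t, |‖f (g i) t‖ - ‖f0 t‖|) + |‖f0 (σ i)‖ - ‖y‖| := by
      intro i
      have h1 : |‖x i‖ - ‖f0 (σ i)‖| ≤ ⨆ t, |‖f (g i) t‖ - ‖f0 t‖| :=
        le_ciSup (isCompact_range (contB (g i))).bddAbove (σ i)
      calc ‖‖x i‖ - ‖y‖‖ = |‖x i‖ - ‖y‖| := rfl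
      _ ≤ |‖x i‖ - ‖f0 (σ i)‖| + |‖f0 (σ i)‖ - ‖y‖| := abs_sub_le _ _ _
      _ ≤ _ := by gcongr
    refine squeeze_zero_norm hbound ?_
    have h2 : Tendsto (fun i => ⨆ t, |‖f (g i) t‖ - ‖f0 t‖|) atTop (𝓝 0) :=
      hB.comp hgmono.tendsto_atTop
    have h3 : Tendsto (fun i => |‖f0 (σ i)‖ - ‖y‖|) atTop (𝓝 0) := by
      have : Tendsto (fun i => ‖f0 (σ i)‖) atTop (𝓝 ‖y‖) :=
        (f0.continuous.norm.tendsto t0).comp hσt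
      have := (tendsto_sub_nhds_zero_iff.mpr this).abs
      simpa using this
    simpa using h2.add h3
  have hxy : Tendsto x atTop (𝓝 y) := radon_riesz hw hn
  -- contradiction with ε ≤ ‖f (g i) (σ i) - f0 (σ i)‖
  have hclose : Tendsto (fun i => ‖x i - f0 (σ i)‖) atTop (𝓝 0) := by
    have h1 : Tendsto (fun i => x i - f0 (σ i)) atTop (𝓝 (y - y)) :=
      hxy.sub ((f0.continuous.tendsto t0).comp hσt)
    rw [sub_self] at h1
    simpa using (tendsto_zero_iff_norm_tendsto_zero).mp h1
  have hge : ∀ i, ε ≤ ‖x i - f0 (σ i)‖ := fun i => hτ (ms i)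
  have := ge_of_tendsto hclose (Eventually.of_forall hge)
  linarith

/-- Let `𝔹` be a separable uniformly convex Banach space and
`u_n, u : Ω → C([0,T];𝔹)` measurable with `sup_n E[sup_t ‖u_n(t)‖] < ∞` and
`E[sup_t ‖u(t)‖] < ∞`. If for every `φ ∈ 𝔹*`, `E[sup_t |⟨φ, u_n(t) − u(t)⟩|] → 0` and
`E[sup_t |‖u_n(t)‖ − ‖u(t)‖|] → 0`, then `sup_t ‖u_n(t) − u(t)‖ → 0` in probability. -/
theorem stmt4 {B : Type*} [NormedAddCommGroup B] [NormedSpace ℝ B]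
    [UniformConvexSpace B] [CompleteSpace B] [TopologicalSpace.SeparableSpace B]
    {Ω : Type*} [MeasurableSpace Ω] (P : Measure Ω) [IsProbabilityMeasure P]
    (T : ℝ) (hT : 0 < T)
    (un : ℕ → Ω → C(Set.Icc (0 : ℝ) T, B)) (u : Ω → C(Set.Icc (0 : ℝ) T, B))
    (hunmeas : ∀ n, @Measurable Ω C(Set.Icc (0 : ℝ) T, B) _
      (borel C(Set.Icc (0 : ℝ) T, B)) (un n))
    (humeas : @Measurable Ω C(Set.Icc (0 : ℝ) T, B) _
      (borel C(Set.Icc (0 : ℝ) T, B)) u)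
    (hbdd : ∃ C : ℝ, ∀ n,
      ∫⁻ ω, ENNReal.ofReal (⨆ t : Set.Icc (0 : ℝ) T, ‖un n ω t‖) ∂P ≤ ENNReal.ofReal C)
    (hubdd : ∫⁻ ω, ENNReal.ofReal (⨆ t : Set.Icc (0 : ℝ) T, ‖u ω t‖) ∂P ≠ ⊤)
    (hweak : ∀ φ : StrongDual ℝ B,
      Tendsto (fun n => ∫⁻ ω,
        ENNReal.ofReal (⨆ t : Set.Icc (0 : ℝ) T, |φ (un n ω t) - φ (u ω t)|) ∂P)
        atTop (𝓝 0))
    (hnorm : Tendsto (fun n => ∫⁻ ω,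
        ENNReal.ofReal (⨆ t : Set.Icc (0 : ℝ) T, |‖un n ω t‖ - ‖u ω t‖|) ∂P)
        atTop (𝓝 0)) :
    ∀ ε > (0 : ℝ),
      Tendsto (fun n => P {ω | ε < ⨆ t : Set.Icc (0 : ℝ) T, ‖un n ω t - u ω t‖})
        atTop (𝓝 0) := by
  clear hbdd hubdd
  haveI : SecondCountableTopology B := UniformSpace.secondCountable_of_separable B
  letI : MeasurableSpace B := borel B
  haveI : BorelSpace B := ⟨rfl⟩
  haveI : Nonempty (Set.Icc (0 : ℝ) T) := Set.Nonempty.to_subtype (Set.nonempty_Icc.mpr hT.le)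
  letI : MeasurableSpace C(Set.Icc (0 : ℝ) T, B) := borel C(Set.Icc (0 : ℝ) T, B)
  haveI : BorelSpace C(Set.Icc (0 : ℝ) T, B) := ⟨rfl⟩
  obtain ⟨d, hd⟩ := TopologicalSpace.exists_dense_seq (Set.Icc (0 : ℝ) T)
  obtain ⟨φ, hφ1, hφ2⟩ := exists_norming_family B
  have hevalm : ∀ (t : Set.Icc (0 : ℝ) T), Measurable fun f : C(Set.Icc (0 : ℝ) T, B) => f t :=
    fun t => (continuous_eval_const t).measurable
  have hunm : ∀ n (t : Set.Icc (0 : ℝ) T), Measurable fun ω => un n ω t := fun n t =>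
    (hevalm t).comp (hunmeas n)
  have hum : ∀ (t : Set.Icc (0 : ℝ) T), Measurable fun ω => u ω t := fun t =>
    (hevalm t).comp humeas
  set A : ℕ → ℕ → Ω → ℝ :=
    fun k n ω => ⨆ t : Set.Icc (0 : ℝ) T, |φ k (un n ω t) - φ k (u ω t)| with hA
  set Bq : ℕ → Ω → ℝ :=
    fun n ω => ⨆ t : Set.Icc (0 : ℝ) T, |‖un n ω t‖ - ‖u ω t‖| with hBqdef
  set X : ℕ → Ω → ℝ :=
    fun n ω => ⨆ t : Set.Icc (0 : ℝ) T, ‖un n ω t - u ω t‖ with hXdef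
  have contA : ∀ k n ω, Continuous fun t : Set.Icc (0 : ℝ) T =>
      |φ k (un n ω t) - φ k (u ω t)| :=
    fun k n ω => (((φ k).continuous.comp (un n ω).continuous).sub
      ((φ k).continuous.comp (u ω).continuous)).abs
  have contB : ∀ n ω, Continuous fun t : Set.Icc (0 : ℝ) T => |‖un n ω t‖ - ‖u ω t‖| :=
    fun n ω => ((un n ω).continuous.norm.sub (u ω).continuous.norm).abs
  have contX : ∀ n ω, Continuous fun t : Set.Icc (0 : ℝ) T => ‖un n ω t - u ω t‖ :=
    fun n ω => ((un n ω).continuous.sub (u ω).continuous).norm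
  have measA : ∀ k n, Measurable (A k n) := fun k n =>
    meas_sup hd (contA k n) (fun i =>
      (((φ k).continuous.measurable.comp (hunm n (d i))).sub
        ((φ k).continuous.measurable.comp (hum (d i)))).abs)
  have measB : ∀ n, Measurable (Bq n) := fun n =>
    meas_sup hd (contB n) (fun i => ((hunm n (d i)).norm.sub (hum (d i)).norm).abs)
  have measX : ∀ n, Measurable (X n) := fun n =>
    meas_sup hd (contX n) (fun i => ((hunm n (d i)).sub (hum (d i))).norm)
  have nonnegB : ∀ n ω, 0 ≤ Bq n ω := fun n ω =>
    le_trans (abs_nonneg _)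
      (le_ciSup (isCompact_range (contB n ω)).bddAbove (Classical.arbitrary _))
  have nonnegA : ∀ k n ω, 0 ≤ A k n ω := fun k n ω =>
    le_trans (abs_nonneg _)
      (le_ciSup (isCompact_range (contA k n ω)).bddAbove (Classical.arbitrary _))
  -- the combined ℝ≥0∞-valued functional
  set G : ℕ → Ω → ℝ≥0∞ := fun n ω =>
    min (ENNReal.ofReal (Bq n ω)) 1 +
      ∑' k, (2 : ℝ≥0∞)⁻¹ ^ (k + 1) * min (ENNReal.ofReal (A k n ω)) 1 with hG
  have measMinB : ∀ n, Measurable fun ω => min (ENNReal.ofReal (Bq n ω)) 1 := fun n =>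
    (measB n).ennreal_ofReal.min measurable_const
  have measMinA : ∀ k n, Measurable fun ω => min (ENNReal.ofReal (A k n ω)) 1 := fun k n =>
    (measA k n).ennreal_ofReal.min measurable_const
  have measG : ∀ n, Measurable (G n) := fun n =>
    (measMinB n).add (Measurable.ennreal_tsum fun k => (measMinA k n).const_mul _)
  -- integral of G tends to 0
  have hInt1 : Tendsto (fun n => ∫⁻ ω, min (ENNReal.ofReal (Bq n ω)) 1 ∂P) atTop (𝓝 0) :=
    tendsto_of_tendsto_of_tendsto_of_le_of_le tendsto_const_nhds hnorm (fun n => zero_le)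
      (fun n => lintegral_mono fun ω => min_le_left _ _)
  have hc : ∀ k, Tendsto (fun n => ∫⁻ ω, min (ENNReal.ofReal (A k n ω)) 1 ∂P) atTop (𝓝 0) :=
    fun k => tendsto_of_tendsto_of_tendsto_of_le_of_le tendsto_const_nhds (hweak (φ k))
      (fun n => zero_le) (fun n => lintegral_mono fun ω => min_le_left _ _)
  have hIntA1 : ∀ k n, ∫⁻ ω, min (ENNReal.ofReal (A k n ω)) 1 ∂P ≤ 1 := by
    intro k n
    calc ∫⁻ ω, min (ENNReal.ofReal (A k n ω)) 1 ∂P ≤ ∫⁻ _, 1 ∂P :=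
      lintegral_mono fun ω => min_le_right _ _
    _ = 1 := by simp
  have hgeo : ∑' k : ℕ, (2 : ℝ≥0∞)⁻¹ ^ (k + 1) ≠ ⊤ := by
    have h1 : ∑' k : ℕ, (2 : ℝ≥0∞)⁻¹ ^ (k + 1) ≤ ∑' k : ℕ, (2 : ℝ≥0∞)⁻¹ ^ k :=
      ENNReal.tsum_le_tsum fun k =>
        pow_le_pow_of_le_one (zero_le) (by simp [ENNReal.inv_le_one]) (Nat.le_succ k)
    refine ne_top_of_le_ne_top ?_ h1
    rw [ENNReal.tsum_geometric, ENNReal.one_sub_inv_two, inv_inv]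
    exact ENNReal.ofNat_ne_top
  have hseries : Tendsto (fun n => ∑' k, (2 : ℝ≥0∞)⁻¹ ^ (k + 1) *
      ∫⁻ ω, min (ENNReal.ofReal (A k n ω)) 1 ∂P) atTop (𝓝 0) := by
    have hDCT := tendsto_lintegral_of_dominated_convergence
      (μ := (Measure.count : Measure ℕ))
      (F := fun n k => (2 : ℝ≥0∞)⁻¹ ^ (k + 1) * ∫⁻ ω, min (ENNReal.ofReal (A k n ω)) 1 ∂P)
      (f := fun _ => 0) (fun k => (2 : ℝ≥0∞)⁻¹ ^ (k + 1))
      (fun n => Measurable.of_discrete)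
      (fun n => Eventually.of_forall fun k => by
        calc (2 : ℝ≥0∞)⁻¹ ^ (k + 1) * ∫⁻ ω, min (ENNReal.ofReal (A k n ω)) 1 ∂P
            ≤ (2 : ℝ≥0∞)⁻¹ ^ (k + 1) * 1 := mul_le_mul_right (hIntA1 k n) _
        _ = (2 : ℝ≥0∞)⁻¹ ^ (k + 1) := mul_one _)
      (by rwa [lintegral_count])
      (Eventually.of_forall fun k => by
        have h := ENNReal.Tendsto.const_mul (hc k) (a := (2 : ℝ≥0∞)⁻¹ ^ (k + 1))
          (Or.inr (ENNReal.pow_ne_top (by simp)))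
        simpa using h)
    simpa [lintegral_count] using hDCT
  have hGint : Tendsto (fun n => ∫⁻ ω, G n ω ∂P) atTop (𝓝 0) := by
    have heq : ∀ n, ∫⁻ ω, G n ω ∂P = (∫⁻ ω, min (ENNReal.ofReal (Bq n ω)) 1 ∂P)
        + ∑' k, (2 : ℝ≥0∞)⁻¹ ^ (k + 1) * ∫⁻ ω, min (ENNReal.ofReal (A k n ω)) 1 ∂P := by
      intro n
      rw [hG]
      rw [lintegral_add_left (measMinB n)]
      congr 1
      rw [lintegral_tsum (fun k => ((measMinA k n).const_mul _).aemeasurable)]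
      congr 1; funext k
      rw [lintegral_const_mul _ (measMinA k n)]
    simp only [heq]
    simpa using hInt1.add hseries
  -- main argument
  intro ε hε
  apply tendsto_of_subseq_tendsto
  intro ns hns
  have hsub : Tendsto (fun i => ∫⁻ ω, G (ns i) ω ∂P) atTop (𝓝 0) := hGint.comp hns
  have hsel : ∀ i : ℕ, ∃ j, ∫⁻ ω, G (ns j) ω ∂P < (2 : ℝ≥0∞)⁻¹ ^ i := fun i =>
    (hsub.eventually_lt_const (ENNReal.pow_pos (by simp) i)).exists
  choose ms hms using hsel
  refine ⟨ms, ?_⟩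
  have hsumY : ∫⁻ ω, ∑' i, G (ns (ms i)) ω ∂P ≠ ⊤ := by
    rw [lintegral_tsum (fun i => (measG _).aemeasurable)]
    refine ne_top_of_le_ne_top ?_ (ENNReal.tsum_le_tsum fun i => (hms i).le)
    have h2 : ∑' i : ℕ, (2 : ℝ≥0∞)⁻¹ ^ i = (1 - 2⁻¹)⁻¹ := ENNReal.tsum_geometric _
    rw [h2, ENNReal.one_sub_inv_two, inv_inv]
    exact ENNReal.ofNat_ne_top
  have haelim : ∀ᵐ ω ∂P, Tendsto (fun i => G (ns (ms i)) ω) atTop (𝓝 0) := by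
    filter_upwards [ae_lt_top (Measurable.ennreal_tsum fun i => measG (ns (ms i))) hsumY]
      with ω hω
    exact ENNReal.tendsto_atTop_zero_of_tsum_ne_top hω.ne
  have haeX : ∀ᵐ ω ∂P, Tendsto (fun i => X (ns (ms i)) ω) atTop (𝓝 0) := by
    filter_upwards [haelim] with ω hω
    -- component convergences
    have hmin_to_real : ∀ (v : ℕ → ℝ), (∀ i, 0 ≤ v i) →
        Tendsto (fun i => min (ENNReal.ofReal (v i)) 1) atTop (𝓝 0) →
        Tendsto v atTop (𝓝 0) := by
      intro v hv hmin
      have h1 : ∀ᶠ i in atTop, min (ENNReal.ofReal (v i)) 1 < 1 :=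
        hmin.eventually_lt_const (by norm_num)
      have h2 : Tendsto (fun i => ENNReal.ofReal (v i)) atTop (𝓝 0) := by
        refine hmin.congr' ?_
        filter_upwards [h1] with i hi
        rcases min_cases (ENNReal.ofReal (v i)) 1 with ⟨he, -⟩ | ⟨he, -⟩
        · exact he
        · exact absurd (he ▸ hi) (lt_irrefl _)
      have h3 := (ENNReal.tendsto_toReal (by simp : (0:ℝ≥0∞) ≠ ⊤)).comp h2
      simp only [Function.comp_def, ENNReal.toReal_zero] at h3
      exact h3.congr fun i => ENNReal.toReal_ofReal (hv i)
    have hBcomp : Tendsto (fun i => min (ENNReal.ofReal (Bq (ns (ms i)) ω)) 1) atTop (𝓝 0) :=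
      tendsto_of_tendsto_of_tendsto_of_le_of_le tendsto_const_nhds hω (fun i => zero_le)
        (fun i => self_le_add_right _ _)
    have hBreal : Tendsto (fun i => Bq (ns (ms i)) ω) atTop (𝓝 0) :=
      hmin_to_real _ (fun i => nonnegB _ ω) hBcomp
    have hAreal : ∀ k, Tendsto (fun i => A k (ns (ms i)) ω) atTop (𝓝 0) := by
      intro k
      have hterm : Tendsto (fun i => (2 : ℝ≥0∞)⁻¹ ^ (k + 1) *
          min (ENNReal.ofReal (A k (ns (ms i)) ω)) 1) atTop (𝓝 0) := by
        refine tendsto_of_tendsto_of_tendsto_of_le_of_le tendsto_const_nhds hω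
          (fun i => zero_le) (fun i => ?_)
        calc (2 : ℝ≥0∞)⁻¹ ^ (k + 1) * min (ENNReal.ofReal (A k (ns (ms i)) ω)) 1
            ≤ ∑' k', (2 : ℝ≥0∞)⁻¹ ^ (k' + 1) * min (ENNReal.ofReal (A k' (ns (ms i)) ω)) 1 :=
          ENNReal.le_tsum k
        _ ≤ G (ns (ms i)) ω := self_le_add_left _ _
      have hmul := ENNReal.Tendsto.const_mul hterm (a := (2 : ℝ≥0∞) ^ (k + 1))
        (Or.inr (ENNReal.pow_ne_top (by simp)))
      rw [mul_zero] at hmul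
      have hcancel : ∀ i, (2 : ℝ≥0∞) ^ (k + 1) * ((2 : ℝ≥0∞)⁻¹ ^ (k + 1) *
          min (ENNReal.ofReal (A k (ns (ms i)) ω)) 1)
          = min (ENNReal.ofReal (A k (ns (ms i)) ω)) 1 := by
        intro i
        rw [← mul_assoc, ← mul_pow, ENNReal.mul_inv_cancel (by norm_num) (by norm_num),
          one_pow, one_mul]
      exact hmin_to_real _ (fun i => nonnegA k _ ω) (hmul.congr hcancel)
    -- apply the deterministic lemma
    exact det_lemma hφ1 hφ2 (fun hw hn => radon_riesz hφ1 hφ2 hw hn)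
      (f := fun i => un (ns (ms i)) ω) (f0 := u ω) hAreal hBreal
  have TIM := tendstoInMeasure_of_tendsto_ae (μ := P) (f := fun i => X (ns (ms i)))
    (g := fun _ => (0 : ℝ)) (fun i => (measX _).aestronglyMeasurable) haeX
  have hTIM := tendstoInMeasure_iff_dist.mp TIM ε hε
  refine tendsto_of_tendsto_of_tendsto_of_le_of_le tendsto_const_nhds hTIM (fun i => zero_le)
    (fun i => measure_mono ?_)
  intro ω hω
  simp only [Set.mem_setOf_eq] at hω ⊢
  rw [Real.dist_0_eq_abs]
  exact le_abs.mpr (Or.inl (le_of_lt hω))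
end

section
/- Let 𝔹 be a uniformly convex Banach space, T > 0, and let v_n, v ∈ C([0,T];𝔹), n ∈ ℕ. Assume that (i) for every φ in the dual space 𝔹*, lim_{n→∞} sup_{t∈[0,T]} |⟨φ, v_n(t) − v(t)⟩| = 0, and (ii) lim_{n→∞} sup_{t∈[0,T]} |‖v_n(t)‖_𝔹 − ‖v(t)‖_𝔹| = 0. Then lim_{n→∞} sup_{t∈[0,T]} ‖v_n(t) − v(t)‖_𝔹 = 0. -/
open Filter Topology Set

/-- In a uniformly convex Banach space `𝔹`, if `v_n, v ∈ C([0,T];𝔹)` satisfy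
uniform-in-`t` weak convergence `⟨φ, v_n(t)⟩ → ⟨φ, v(t)⟩` for every `φ ∈ 𝔹*` and uniform-in-`t`
convergence of norms `‖v_n(t)‖ → ‖v(t)‖`, then `sup_{t∈[0,T]} ‖v_n(t) − v(t)‖ → 0`. -/
theorem stmt5 {B : Type*} [NormedAddCommGroup B] [NormedSpace ℝ B]
    [UniformConvexSpace B] [CompleteSpace B]
    (T : ℝ) (hT : 0 < T)
    (vn : ℕ → C(Set.Icc (0 : ℝ) T, B)) (v : C(Set.Icc (0 : ℝ) T, B))
    (hweak : ∀ φ : StrongDual ℝ B,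
      Tendsto (fun n => ⨆ t : Set.Icc (0 : ℝ) T, |φ (vn n t) - φ (v t)|) atTop (𝓝 0))
    (hnorm : Tendsto (fun n => ⨆ t : Set.Icc (0 : ℝ) T, |‖vn n t‖ - ‖v t‖|) atTop (𝓝 0)) :
    Tendsto (fun n => ⨆ t : Set.Icc (0 : ℝ) T, ‖vn n t - v t‖) atTop (𝓝 0) := by
  haveI : Nonempty (Set.Icc (0 : ℝ) T) := ⟨⟨0, by simp [hT.le]⟩⟩
  -- helper: a term is at most the sup, for continuous functions on the compact I
  have hterm : ∀ (g : Set.Icc (0 : ℝ) T → ℝ), Continuous g → ∀ t : Set.Icc (0 : ℝ) T, g t ≤ ⨆ s, g s := by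
    intro g hg t
    exact le_ciSup (isCompact_range hg).bddAbove t
  -- from tendsto of sups to 0: eventually all terms < κ
  have hev_norm : ∀ κ : ℝ, 0 < κ →
      ∀ᶠ n in atTop, ∀ t : Set.Icc (0 : ℝ) T, |‖vn n t‖ - ‖v t‖| < κ := by
    intro κ hκ
    filter_upwards [hnorm.eventually (gt_mem_nhds hκ)] with n hn t
    exact lt_of_le_of_lt (hterm _ ((((vn n).continuous.norm).sub (v.continuous.norm)).abs) t) hn
  have hev_weak : ∀ (φ : StrongDual ℝ B) (κ : ℝ), 0 < κ →
      ∀ᶠ n in atTop, ∀ t : Set.Icc (0 : ℝ) T, |φ (vn n t) - φ (v t)| < κ := by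
    intro φ κ hκ
    filter_upwards [(hweak φ).eventually (gt_mem_nhds hκ)] with n hn t
    refine lt_of_le_of_lt (hterm (fun t => |φ (vn n t) - φ (v t)|) ?_ t) hn
    exact (continuous_abs).comp ((φ.continuous.comp (vn _).continuous).sub
      (φ.continuous.comp v.continuous))
  -- key local statement
  have key : ∀ ε : ℝ, 0 < ε → ∀ s : Set.Icc (0 : ℝ) T, ∃ U : Set (Set.Icc (0 : ℝ) T), U ∈ 𝓝 s ∧
      ∀ᶠ n in atTop, ∀ t ∈ U, ‖vn n t - v t‖ < ε := by
    intro ε hε s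
    by_cases hvs : v s = 0
    · -- small norm case
      refine ⟨{t : Set.Icc (0 : ℝ) T | ‖v t‖ < ε / 4}, ?_, ?_⟩
      · refine (isOpen_lt v.continuous.norm continuous_const).mem_nhds ?_
        show ‖v s‖ < ε / 4
        rw [hvs, norm_zero]; linarith
      · filter_upwards [hev_norm (ε/4) (by linarith)] with n hn t ht
        have h1 : |‖vn n t‖ - ‖v t‖| < ε/4 := hn t
        have h2 : ‖v t‖ < ε/4 := ht
        calc ‖vn n t - v t‖ ≤ ‖vn n t‖ + ‖v t‖ := norm_sub_le _ _
          _ < (ε/4 + ε/4) + ε/4 := by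
              have := abs_lt.mp h1
              linarith [this.2]
          _ < ε := by linarith
    · -- main case
      have hr : 0 < ‖v s‖ := norm_pos_iff.mpr hvs
      set r := ‖v s‖ with hrdef
      obtain ⟨φ, hφ1, hφx⟩ := exists_dual_vector ℝ (v s) hr.ne'
      have hε' : 0 < ε / (2 * r) := by positivity
      obtain ⟨δ, hδ, hconv⟩ := exists_forall_closed_ball_dist_add_le_two_sub B hε'
      set κ := min (δ * r / 8) (r / 2) with hκdef
      have hκ : 0 < κ := lt_min (by positivity) (by positivity)
      have hκ1 : κ ≤ δ * r / 8 := min_le_left _ _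
      have hκ2 : κ ≤ r / 2 := min_le_right _ _
      refine ⟨{t : Set.Icc (0 : ℝ) T | ‖v t - v s‖ < κ}, ?_, ?_⟩
      · refine (isOpen_lt (v.continuous.sub continuous_const).norm continuous_const).mem_nhds ?_
        show ‖v s - v s‖ < κ
        rw [sub_self, norm_zero]; exact hκ
      · filter_upwards [hev_norm κ hκ, hev_weak φ κ hκ] with n hn hw t ht
        set a := vn n t with hadef
        set b := v t with hbdef
        have htκ : ‖b - v s‖ < κ := ht
        have hbnorm : ‖b‖ ≤ r + κ := by
          calc ‖b‖ = ‖v s + (b - v s)‖ := by rw [add_sub_cancel]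
            _ ≤ ‖v s‖ + ‖b - v s‖ := norm_add_le _ _
            _ ≤ r + κ := by linarith
        have hanorm : ‖a‖ ≤ r + 2 * κ := by
          have := abs_lt.mp (hn t)
          linarith [this.2]
        have hφb : r - κ ≤ φ b := by
          have h0 : v s + (b - v s) = b := by abel
          have h1 : φ b = φ (v s) + φ (b - v s) := by
            rw [← map_add, h0]
          have h2 : |φ (b - v s)| ≤ ‖φ‖ * ‖b - v s‖ := φ.le_opNorm _ |>.trans_eq' rfl
          rw [hφ1, one_mul] at h2
          have := abs_le.mp h2
          have hφx' : φ (v s) = r := hφx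
          rw [h1, hφx']
          linarith
        have hφab : -κ ≤ φ a - φ b := by
          have := abs_lt.mp (hw t)
          linarith [this.1]
        have hsum : 2 * r - 3 * κ ≤ ‖a + b‖ := by
          have h1 : φ (a + b) ≤ |φ (a + b)| := le_abs_self _
          have h2 : |φ (a + b)| ≤ ‖φ‖ * ‖a + b‖ := φ.le_opNorm _
          rw [hφ1, one_mul] at h2
          have h3 : φ (a + b) = (φ a - φ b) + 2 * φ b := by rw [map_add]; ring
          nlinarith
        set R := r + 2 * κ with hRdef
        have hR : 0 < R := by positivity
        have hRinv : 0 < R⁻¹ := inv_pos.mpr hR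
        have hns : ∀ z : B, ‖R⁻¹ • z‖ = R⁻¹ * ‖z‖ := fun z => by
          rw [norm_smul, norm_inv, Real.norm_eq_abs, abs_of_pos hR]
        have hx : ‖R⁻¹ • a‖ ≤ 1 := by
          rw [hns]
          calc R⁻¹ * ‖a‖ ≤ R⁻¹ * R := by
                exact mul_le_mul_of_nonneg_left (by linarith) hRinv.le
            _ = 1 := inv_mul_cancel₀ hR.ne'
        have hy : ‖R⁻¹ • b‖ ≤ 1 := by
          rw [hns]
          calc R⁻¹ * ‖b‖ ≤ R⁻¹ * R := by
                exact mul_le_mul_of_nonneg_left (by linarith) hRinv.le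
            _ = 1 := inv_mul_cancel₀ hR.ne'
        have hxy : 2 - δ < ‖R⁻¹ • a + R⁻¹ • b‖ := by
          rw [← smul_add, hns]
          have h4 : R * (2 - δ) < ‖a + b‖ := by nlinarith
          calc 2 - δ = R⁻¹ * (R * (2 - δ)) := by field_simp
            _ < R⁻¹ * ‖a + b‖ := mul_lt_mul_of_pos_left h4 hRinv
        have hdiff : ‖R⁻¹ • a - R⁻¹ • b‖ < ε / (2 * r) := by
          by_contra h
          push_neg at h
          have := hconv hx hy h
          linarith
        rw [← smul_sub, hns] at hdiff
        have hdiff2 : ‖a - b‖ < R * (ε / (2 * r)) := by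
          have h5 := mul_lt_mul_of_pos_left hdiff hR
          rwa [← mul_assoc, mul_inv_cancel₀ hR.ne', one_mul] at h5
        calc ‖a - b‖ < R * (ε / (2 * r)) := hdiff2
          _ ≤ 2 * r * (ε / (2 * r)) := by
              have hRle : R ≤ 2 * r := by linarith
              have : 0 ≤ ε / (2 * r) := le_of_lt hε'
              nlinarith
          _ = ε := by field_simp
  -- assemble via compactness
  rw [NormedAddCommGroup.tendsto_nhds_zero]
  intro ε hε
  have hε2 : 0 < ε / 2 := by linarith
  choose U hU hevU using key (ε/2) hε2
  obtain ⟨F, -, hF⟩ := isCompact_univ.elim_nhds_subcover U (fun s _ => hU s)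
  have hall : ∀ᶠ n in atTop, ∀ s ∈ F, ∀ t ∈ U s, ‖vn n t - v t‖ < ε/2 :=
    (Filter.eventually_all_finset F).mpr (fun s _ => hevU s)
  filter_upwards [hall] with n hn
  have hle : (⨆ t : Set.Icc (0 : ℝ) T, ‖vn n t - v t‖) ≤ ε / 2 := by
    apply ciSup_le
    intro t
    obtain ⟨s, hsF, hts⟩ := Set.mem_iUnion₂.mp (hF (Set.mem_univ t))
    exact (hn s hsF t hts).le
  have hge : 0 ≤ ⨆ t : Set.Icc (0 : ℝ) T, ‖vn n t - v t‖ :=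
    Real.iSup_nonneg (fun t => norm_nonneg _)
  rw [Real.norm_eq_abs, abs_of_nonneg hge]
  linarith
end

section
/- Let f ∈ L¹_loc(ℝ^d) satisfy ∫_{B_{N+R}} |f(x)| log(|f(x)|+1) dx < ∞ for given N, R > 0. Then there exist constants C_{d,N} > 0 depending only on d and N, and C_d > 0 depending only on d, such that ∫_{B_N} M_R|f|(x) dx ≤ C_{d,N} + C_d ∫_{B_{N+R}} |f(x)| log(|f(x)|+1) dx. -/
open MeasureTheory Metric Set
open scoped ENNReal NNReal

/-- The local Hardy–Littlewood maximal function
`M_R h(x) = sup_{0<r<R} (1/ℒ(B_r)) ∫_{B_r} h(x+y) dy`, for a `[0,∞]`-valued function `h`. -/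
noncomputable def locMax {d : ℕ} (R : ℝ) (h : EuclideanSpace ℝ (Fin d) → ℝ≥0∞)
    (x : EuclideanSpace ℝ (Fin d)) : ℝ≥0∞ :=
  ⨆ r ∈ Set.Ioo (0 : ℝ) R,
    (volume (closedBall (0 : EuclideanSpace ℝ (Fin d)) r))⁻¹ *
      ∫⁻ y in closedBall (0 : EuclideanSpace ℝ (Fin d)) r, h (x + y)

section Stmt8Aux

lemma stmt8_twopow (k : ℕ) : (2:ℝ≥0∞)^k = ENNReal.ofReal ((2:ℝ)^k) := by
  rw [ENNReal.ofReal_pow (by norm_num)]; norm_num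

lemma stmt8_geom_aux : ∀ m : ℕ, 2 + ∑ n ∈ Finset.range m, (2:ℝ≥0∞)^(n+1) = 2^(m+1)
  | 0 => by simp
  | (m+1) => by
    rw [Finset.sum_range_succ, ← add_assoc, stmt8_geom_aux m, pow_succ (2:ℝ≥0∞) (m+1)]
    ring

lemma stmt8_dyadic_bound (a : ℝ≥0∞) :
    a ≤ 2 + ∑' n : ℕ, 2^(n+1) * (if (2:ℝ≥0∞)^n < a then 1 else 0) := by
  rcases le_or_gt a 2 with hle | hgt
  · exact le_add_right hle
  rcases eq_or_ne a ⊤ with rfl | hat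
  · have : (⊤:ℝ≥0∞) ≤ ∑' n : ℕ, 2^(n+1) * (if (2:ℝ≥0∞)^n < ⊤ then 1 else 0) := by
      calc (⊤:ℝ≥0∞) = ∑' _ : ℕ, 2 := (ENNReal.tsum_const_eq_top_of_ne_zero (by norm_num)).symm
        _ ≤ _ := ENNReal.tsum_le_tsum fun n => by
            rw [if_pos (ENNReal.pow_lt_top (by norm_num) : (2:ℝ≥0∞)^n < ⊤), mul_one]
            exact le_self_pow₀ one_le_two (Nat.succ_ne_zero n)
    exact this.trans le_add_self
  · set x := a.toReal with hx
    have hax : a = ENNReal.ofReal x := (ENNReal.ofReal_toReal hat).symm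
    have hx2 : 2 < x := by
      have := (ENNReal.toReal_lt_toReal (by norm_num : (2:ℝ≥0∞) ≠ ⊤) hat).2 hgt
      simpa using this
    have hx0 : 0 < x := by linarith
    set m := ⌊Real.logb 2 x⌋₊ with hm
    have hlow : (2:ℝ)^m ≤ x := by
      have : (m:ℝ) ≤ Real.logb 2 x := Nat.floor_le (Real.logb_nonneg one_lt_two (by linarith))
      calc (2:ℝ)^m = (2:ℝ)^(m:ℝ) := by rw [Real.rpow_natCast]
        _ ≤ (2:ℝ)^(Real.logb 2 x) := Real.rpow_le_rpow_left_iff one_lt_two |>.2 this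
        _ = x := Real.rpow_logb (by norm_num) (by norm_num) hx0
    have hhigh : x < (2:ℝ)^(m+1) := by
      have : Real.logb 2 x < (m:ℝ) + 1 := Nat.lt_floor_add_one _
      calc x = (2:ℝ)^(Real.logb 2 x) := (Real.rpow_logb (by norm_num) (by norm_num) hx0).symm
        _ < (2:ℝ)^((m:ℝ)+1) := Real.rpow_lt_rpow_left_iff one_lt_two |>.2 this
        _ = (2:ℝ)^(m+1) := by rw [← Real.rpow_natCast]; norm_num
    have ha_le : a ≤ (2:ℝ≥0∞)^(m+1) := by
      rw [hax, stmt8_twopow]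
      exact ENNReal.ofReal_le_ofReal hhigh.le
    have hlow' : ∀ n < m, (2:ℝ≥0∞)^n < a := by
      intro n hn
      rw [hax, stmt8_twopow]
      refine (ENNReal.ofReal_lt_ofReal_iff hx0).2 ?_
      calc (2:ℝ)^n < 2^m := pow_lt_pow_right₀ one_lt_two hn
        _ ≤ x := hlow
    calc a ≤ (2:ℝ≥0∞)^(m+1) := ha_le
      _ = 2 + ∑ n ∈ Finset.range m, (2:ℝ≥0∞)^(n+1) := (stmt8_geom_aux m).symm
      _ = 2 + ∑ n ∈ Finset.range m,
            (2:ℝ≥0∞)^(n+1) * (if (2:ℝ≥0∞)^n < a then 1 else 0) := by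
          congr 1
          refine Finset.sum_congr rfl fun n hn => ?_
          rw [if_pos (hlow' n (Finset.mem_range.1 hn)), mul_one]
      _ ≤ _ := by
          gcongr
          exact ENNReal.sum_le_tsum _

lemma stmt8_count_bound (a : ℝ) (ha : 0 ≤ a) :
    (∑' n : ℕ, if (2:ℝ≥0∞)^n / 2 < ENNReal.ofReal a then ENNReal.ofReal a else 0) ≤
      ENNReal.ofReal ((1 / Real.log 2 + 2 / Real.log (3/2)) * (a * Real.log (a + 1))) := by
  have hl2 : 0 < Real.log 2 := Real.log_pos one_lt_two
  have hl32 : 0 < Real.log (3/2) := Real.log_pos (by norm_num)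
  rcases le_or_gt a (1/2) with hsmall | hbig
  · have hz : ∀ n : ℕ,
        (if (2:ℝ≥0∞)^n / 2 < ENNReal.ofReal a then ENNReal.ofReal a else 0) = 0 := by
      intro n
      rw [if_neg]
      push_neg
      calc ENNReal.ofReal a ≤ ENNReal.ofReal (1/2) := ENNReal.ofReal_le_ofReal hsmall
        _ = 1 / 2 := by rw [ENNReal.ofReal_div_of_pos (by norm_num)]; norm_num
        _ ≤ (2:ℝ≥0∞)^n / 2 := by
            gcongr
            exact one_le_pow_of_one_le' one_le_two n
    simp [hz]
  · have ha0 : 0 < a := by linarith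
    have h2a : 1 < 2 * a := by linarith
    set L := Real.log (a + 1) with hL
    have hLpos : Real.log (3/2) ≤ L := Real.log_le_log (by norm_num) (by linarith)
    have hLa : Real.log a ≤ L := Real.log_le_log ha0 (by linarith)
    set m := ⌊Real.logb 2 (2 * a)⌋₊ + 1 with hm
    have hvanish : ∀ n, n ∉ Finset.range m →
        (if (2:ℝ≥0∞)^n / 2 < ENNReal.ofReal a then ENNReal.ofReal a else 0) = 0 := by
      intro n hn
      rw [Finset.mem_range, not_lt] at hn
      rw [if_neg]
      push_neg
      have h1 : Real.logb 2 (2 * a) < (n : ℝ) := by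
        have := Nat.lt_floor_add_one (Real.logb 2 (2 * a))
        have h2 : (m : ℝ) ≤ (n : ℝ) := by exact_mod_cast hn
        push_cast [hm] at h2
        linarith
      have h2 : 2 * a ≤ (2:ℝ)^n := by
        calc 2 * a = (2:ℝ)^(Real.logb 2 (2*a)) :=
              (Real.rpow_logb (by norm_num) (by norm_num) (by linarith)).symm
          _ ≤ (2:ℝ)^((n:ℝ)) := (Real.rpow_le_rpow_left_iff one_lt_two).2 h1.le
          _ = (2:ℝ)^n := Real.rpow_natCast 2 n
      calc ENNReal.ofReal a = ENNReal.ofReal (2 * a) / 2 := by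
            rw [ENNReal.ofReal_mul (by norm_num)]
            rw [ENNReal.ofReal_ofNat, mul_comm (2:ℝ≥0∞) (ENNReal.ofReal a),
              div_eq_mul_inv, mul_assoc,
              ENNReal.mul_inv_cancel (by norm_num) (by norm_num), mul_one]
        _ ≤ (2:ℝ≥0∞)^n / 2 := by
            gcongr
            rw [stmt8_twopow]
            exact ENNReal.ofReal_le_ofReal h2
    rw [tsum_eq_sum hvanish]
    have hmle : (m:ℝ) ≤ L / Real.log 2 + 2 := by
      have hfl : (⌊Real.logb 2 (2*a)⌋₊ : ℝ) ≤ Real.logb 2 (2*a) :=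
        Nat.floor_le (Real.logb_nonneg one_lt_two h2a.le)
      have hlogb : Real.logb 2 (2*a) = 1 + Real.log a / Real.log 2 := by
        rw [Real.logb, Real.log_mul (by norm_num) ha0.ne']
        field_simp
      have hdiv : Real.log a / Real.log 2 ≤ L / Real.log 2 := by gcongr
      have hmr : (m:ℝ) = (⌊Real.logb 2 (2*a)⌋₊ : ℝ) + 1 := by rw [hm]; push_cast; ring
      rw [hmr]
      linarith
    have h2L : (2:ℝ) ≤ 2 * (L / Real.log (3/2)) := by
      have : 1 ≤ L / Real.log (3/2) := (one_le_div hl32).2 hLpos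
      linarith
    calc (∑ n ∈ Finset.range m,
          if (2:ℝ≥0∞)^n / 2 < ENNReal.ofReal a then ENNReal.ofReal a else 0)
        ≤ ∑ _n ∈ Finset.range m, ENNReal.ofReal a :=
          Finset.sum_le_sum fun n _ => by split_ifs; exacts [le_rfl, zero_le]
      _ = (m : ℝ≥0∞) * ENNReal.ofReal a := by
          rw [Finset.sum_const, Finset.card_range, nsmul_eq_mul]
      _ ≤ ENNReal.ofReal ((1 / Real.log 2 + 2 / Real.log (3/2)) * (a * L)) := by
          rw [← ENNReal.ofReal_natCast m, ← ENNReal.ofReal_mul (Nat.cast_nonneg m)]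
          refine ENNReal.ofReal_le_ofReal ?_
          calc (m:ℝ) * a ≤ (L / Real.log 2 + 2) * a :=
                mul_le_mul_of_nonneg_right hmle ha
            _ ≤ (L / Real.log 2 + 2 * (L / Real.log (3/2))) * a :=
                mul_le_mul_of_nonneg_right (by linarith) ha
            _ = (1 / Real.log 2 + 2 / Real.log (3/2)) * (a * L) := by ring

variable {d : ℕ}
local notation "E" => EuclideanSpace ℝ (Fin d)

lemma stmt8_lint_translate (h : E → ℝ≥0∞) (x : E) (r : ℝ) :
    ∫⁻ y in closedBall (0 : E) r, h (x + y) = ∫⁻ z in closedBall x r, h z := by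
  have hmp : MeasurePreserving (fun y : E => x + y) volume volume :=
    measurePreserving_add_left volume x
  have hemb : MeasurableEmbedding (fun y : E => x + y) :=
    (MeasurableEquiv.addLeft x).measurableEmbedding
  have hpre : (fun y : E => x + y) ⁻¹' closedBall x r = closedBall (0 : E) r := by
    ext y
    simp [mem_closedBall, dist_eq_norm]
  rw [← hpre, hmp.setLIntegral_comp_preimage_emb hemb]

lemma stmt8_locMax_mono {R : ℝ} {h₁ h₂ : E → ℝ≥0∞} (h : ∀ x, h₁ x ≤ h₂ x) (x : E) :
    locMax R h₁ x ≤ locMax R h₂ x := by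
  refine iSup_mono fun r => iSup_mono fun hr => ?_
  exact mul_le_mul_right (lintegral_mono fun y => h _) _

lemma stmt8_locMax_add_le {R : ℝ} (h₁ h₂ : E → ℝ≥0∞) (hm : Measurable h₁) (x : E) :
    locMax R (fun y => h₁ y + h₂ y) x ≤ locMax R h₁ x + locMax R h₂ x := by
  refine iSup₂_le fun r hr => ?_
  have hadd : ∫⁻ y in closedBall (0 : E) r, (h₁ (x + y) + h₂ (x + y)) =
      (∫⁻ y in closedBall (0 : E) r, h₁ (x + y)) +
        ∫⁻ y in closedBall (0 : E) r, h₂ (x + y) :=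
    lintegral_add_left (hm.comp (measurable_const_add x)) _
  rw [hadd, mul_add]
  gcongr
  · exact le_iSup₂ (f := fun r (_ : r ∈ Ioo (0:ℝ) R) =>
      (volume (closedBall (0:E) r))⁻¹ * ∫⁻ y in closedBall (0:E) r, h₁ (x + y)) r hr
  · exact le_iSup₂ (f := fun r (_ : r ∈ Ioo (0:ℝ) R) =>
      (volume (closedBall (0:E) r))⁻¹ * ∫⁻ y in closedBall (0:E) r, h₂ (x + y)) r hr

lemma stmt8_locMax_const_le {R : ℝ} (c : ℝ≥0∞) (x : E) : locMax R (fun _ => c) x ≤ c := by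
  refine iSup₂_le fun r hr => ?_
  rw [setLIntegral_const, mul_comm c, ← mul_assoc,
    ENNReal.inv_mul_cancel (measure_closedBall_pos volume _ hr.1).ne'
      measure_closedBall_lt_top.ne, one_mul]

lemma stmt8_weak_bound {N R : ℝ} (h : E → ℝ≥0∞) {t : ℝ≥0∞} (ht0 : t ≠ 0) (htt : t ≠ ⊤) :
    volume {x : E | x ∈ closedBall (0 : E) N ∧ t < locMax R h x} ≤
      ENNReal.ofReal ((5:ℝ) ^ d) * t⁻¹ * ∫⁻ z in closedBall (0 : E) (N + R), h z := by
  set S := {x : E | x ∈ closedBall (0 : E) N ∧ t < locMax R h x} with hS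
  have key : ∀ x ∈ S, ∃ r ∈ Ioo (0 : ℝ) R,
      t * volume (closedBall x r) < ∫⁻ z in closedBall x r, h z := by
    rintro x ⟨-, hx⟩
    simp only [locMax, lt_iSup_iff] at hx
    obtain ⟨r, hrI, hlt⟩ := hx
    refine ⟨r, hrI, ?_⟩
    rw [stmt8_lint_translate] at hlt
    have hV0 : volume (closedBall (0 : E) r) ≠ 0 :=
      (measure_closedBall_pos volume _ hrI.1).ne'
    have hVt : volume (closedBall (0 : E) r) ≠ ⊤ := measure_closedBall_lt_top.ne
    rw [Measure.addHaar_closedBall_center volume x]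
    have := ENNReal.mul_lt_mul_left hV0 hVt hlt
    rwa [mul_right_comm, ENNReal.inv_mul_cancel hV0 hVt, one_mul] at this
  choose! rfun hrI hlt using key
  obtain ⟨u, huS, hdisj, hcover⟩ :=
    Vitali.exists_disjoint_subfamily_covering_enlargement_closedBall S id rfun R
      (fun a ha => (hrI a ha).2.le) 5 (by norm_num)
  simp only [id_eq] at hdisj hcover
  have hposr : ∀ b ∈ u, 0 < rfun b := fun b hb => (hrI b (huS hb)).1
  have hucnt : u.Countable := by
    rw [← Set.countable_coe_iff, ← Set.countable_univ_iff]
    have hc := MeasureTheory.Measure.countable_meas_pos_of_disjoint_iUnion (μ := volume)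
      (As := fun b : u => closedBall (b : E) (rfun b))
      (fun b => measurableSet_closedBall)
      (fun i j hij => hdisj i.2 j.2 (Subtype.coe_injective.ne hij))
    exact hc.mono fun b _ => measure_closedBall_pos volume _ (hposr b b.2)
  haveI : Countable ↥u := hucnt.to_subtype
  have hball_sub : ∀ b ∈ u, closedBall (b : E) (rfun b) ⊆ closedBall (0 : E) (N + R) := by
    intro b hb
    refine closedBall_subset_closedBall' ?_
    have hbN : dist b (0 : E) ≤ N := mem_closedBall.1 (huS hb).1
    have := (hrI b (huS hb)).2
    linarith
  calc volume S ≤ volume (⋃ b ∈ u, closedBall b (5 * rfun b)) := by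
        refine measure_mono fun a ha => ?_
        obtain ⟨b, hbu, hsub⟩ := hcover a ha
        exact mem_biUnion hbu (hsub (mem_closedBall_self (hrI a ha).1.le))
    _ ≤ ∑' b : u, volume (closedBall (b : E) (5 * rfun b)) :=
        measure_biUnion_le volume hucnt _
    _ = ∑' b : u, ENNReal.ofReal ((5:ℝ) ^ d) * volume (closedBall (b : E) (rfun b)) := by
        refine tsum_congr fun b => ?_
        rw [Measure.addHaar_closedBall_mul volume (b : E) (by norm_num : (0:ℝ) ≤ 5)
          (hposr b b.2).le, Measure.addHaar_closedBall_center volume (b : E),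
          finrank_euclideanSpace_fin]
    _ ≤ ∑' b : u, ENNReal.ofReal ((5:ℝ) ^ d) *
          (t⁻¹ * ∫⁻ z in closedBall (b : E) (rfun b), h z) := by
        refine ENNReal.tsum_le_tsum fun b => mul_le_mul_right ?_ _
        have hb := hlt b (huS b.2)
        calc volume (closedBall (b : E) (rfun b))
            = t⁻¹ * (t * volume (closedBall (b : E) (rfun b))) := by
              rw [← mul_assoc, ENNReal.inv_mul_cancel ht0 htt, one_mul]
          _ ≤ t⁻¹ * ∫⁻ z in closedBall (b : E) (rfun b), h z :=
              mul_le_mul_right hb.le _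
    _ = ENNReal.ofReal ((5:ℝ) ^ d) * t⁻¹ *
          ∑' b : u, ∫⁻ z in closedBall (b : E) (rfun b), h z := by
        rw [ENNReal.tsum_mul_left, ENNReal.tsum_mul_left, mul_assoc]
    _ = ENNReal.ofReal ((5:ℝ) ^ d) * t⁻¹ *
          ∫⁻ z in ⋃ b : u, closedBall (b : E) (rfun b), h z := by
        rw [lintegral_iUnion (fun b : u => measurableSet_closedBall)
          (fun i j hij => hdisj i.2 j.2 (Subtype.coe_injective.ne hij))]
    _ ≤ ENNReal.ofReal ((5:ℝ) ^ d) * t⁻¹ * ∫⁻ z in closedBall (0 : E) (N + R), h z := by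
        exact mul_le_mul_right (lintegral_mono_set (iUnion_subset fun (b : u) => hball_sub b b.2)) _

lemma stmt8_coeff (n : ℕ) (c I : ℝ≥0∞) :
    (2:ℝ≥0∞)^(n+1) * (c * ((2:ℝ≥0∞)^n / 2)⁻¹ * I) = 4 * c * I := by
  have h1 : ((2:ℝ≥0∞)^n / 2)⁻¹ = 2 / 2^n :=
    ENNReal.inv_div (Or.inr (ENNReal.pow_ne_top (by norm_num))) (Or.inr (by norm_num))
  have h2 : (2:ℝ≥0∞)^(n+1) * (2 / 2^n) = 4 := by
    rw [div_eq_mul_inv, pow_succ,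
      show (2:ℝ≥0∞)^n * 2 * (2 * (2^n)⁻¹) = (2^n * (2^n)⁻¹) * 4 by ring,
      ENNReal.mul_inv_cancel (pow_ne_zero n (by norm_num)) (ENNReal.pow_ne_top (by norm_num)),
      one_mul]
  rw [h1, show (2:ℝ≥0∞)^(n+1) * (c * (2 / 2^n) * I) =
    ((2:ℝ≥0∞)^(n+1) * (2 / 2^n)) * (c * I) by ring, h2]
  ring

end Stmt8Aux


/-- `L log L` bound for the local maximal function. There is a constant
`C_d > 0` depending only on `d` such that for every `N > 0` there is `C_{d,N} > 0` with: for
every `R > 0` and every `f ∈ L¹_loc(ℝ^d)` with `∫_{B_{N+R}} |f| log(|f|+1) < ∞`,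
`∫_{B_N} M_R|f| ≤ C_{d,N} + C_d ∫_{B_{N+R}} |f| log(|f|+1)`. -/
theorem stmt8 {d : ℕ} :
    ∃ Cd > (0 : ℝ), ∀ N > (0 : ℝ), ∃ CdN > (0 : ℝ), ∀ R > (0 : ℝ),
      ∀ f : EuclideanSpace ℝ (Fin d) → ℝ, Measurable f →
        LocallyIntegrable f (volume : Measure (EuclideanSpace ℝ (Fin d))) →
        (∫⁻ x in closedBall (0 : EuclideanSpace ℝ (Fin d)) (N + R),
          ENNReal.ofReal (|f x| * Real.log (|f x| + 1)) ≠ ⊤) →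
        ∫⁻ x in closedBall (0 : EuclideanSpace ℝ (Fin d)) N,
            locMax R (fun y => ENNReal.ofReal |f y|) x ≤
          ENNReal.ofReal CdN + ENNReal.ofReal Cd *
            ∫⁻ x in closedBall (0 : EuclideanSpace ℝ (Fin d)) (N + R),
              ENNReal.ofReal (|f x| * Real.log (|f x| + 1)) := by
  classical
  set E := EuclideanSpace ℝ (Fin d)
  set c₀ : ℝ := 1 / Real.log 2 + 2 / Real.log (3/2) with hc₀def
  have hl2 : 0 < Real.log 2 := Real.log_pos one_lt_two
  have hl32 : 0 < Real.log (3/2) := Real.log_pos (by norm_num)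
  have hc₀pos : 0 < c₀ := add_pos (by positivity) (by positivity)
  refine ⟨4 * 5^d * c₀, by positivity, ?_⟩
  intro N hN
  refine ⟨(2 * volume (closedBall (0:E) N)).toReal + 1,
    by positivity, ?_⟩
  intro R hR f hf _hloc _hfin
  set g : E → ℝ≥0∞ := fun y => ENNReal.ofReal |f y| with hg
  have hgm : Measurable g := hf.abs.ennreal_ofReal
  set L : E → ℝ≥0∞ := fun x => ENNReal.ofReal (|f x| * Real.log (|f x| + 1)) with hLdef
  set hfun : ℕ → E → ℝ≥0∞ := fun n x => if (2:ℝ≥0∞)^n / 2 < g x then g x else 0 with hhfun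
  have hfunm : ∀ n, Measurable (hfun n) := fun n =>
    Measurable.ite (measurableSet_lt measurable_const hgm) hgm measurable_const
  have hdecomp : ∀ n x, g x ≤ hfun n x + (2:ℝ≥0∞)^n / 2 := by
    intro n x
    by_cases hc : (2:ℝ≥0∞)^n / 2 < g x
    · simp only [hhfun, if_pos hc]; exact le_self_add
    · simp only [hhfun, if_neg hc, zero_add]; exact not_lt.1 hc
  set S : ℕ → Set E := fun n =>
    {x : E | x ∈ closedBall (0:E) N ∧ (2:ℝ≥0∞)^n < locMax R g x} with hSdef
  set T : ℕ → Set E := fun n => toMeasurable volume (S n) with hTdef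
  have htn0 : ∀ n : ℕ, ((2:ℝ≥0∞)^n / 2) ≠ 0 := by
    intro n
    rw [Ne, ENNReal.div_eq_zero_iff]
    push_neg
    exact ⟨pow_ne_zero n (by norm_num), by norm_num⟩
  have htnt : ∀ n : ℕ, ((2:ℝ≥0∞)^n / 2) ≠ ⊤ := fun n =>
    (ENNReal.div_lt_top (ENNReal.pow_ne_top (by norm_num)) (by norm_num)).ne
  have hSn : ∀ n, volume (S n) ≤ ENNReal.ofReal ((5:ℝ)^d) * ((2:ℝ≥0∞)^n/2)⁻¹ *
      ∫⁻ z in closedBall (0:E) (N+R), hfun n z := by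
    intro n
    refine le_trans (measure_mono ?_) (stmt8_weak_bound (hfun n) (htn0 n) (htnt n))
    rintro x ⟨hxN, hx⟩
    refine ⟨hxN, ?_⟩
    by_contra hcon
    push_neg at hcon
    have hchain : locMax R g x ≤ locMax R (hfun n) x + (2:ℝ≥0∞)^n / 2 := by
      refine (stmt8_locMax_mono (hdecomp n) x).trans ?_
      refine (stmt8_locMax_add_le _ _ (hfunm n) x).trans ?_
      exact add_le_add_right (stmt8_locMax_const_le _ x) _
    have hdone : locMax R g x ≤ 2^n := by
      refine hchain.trans ?_
      calc locMax R (hfun n) x + 2^n/2 ≤ 2^n/2 + 2^n/2 := add_le_add_left hcon _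
        _ = 2^n := ENNReal.add_halves _
    exact absurd hx (not_lt.2 hdone)
  have hpt : ∀ x : E, (closedBall (0:E) N).indicator (locMax R g) x ≤
      (closedBall (0:E) N).indicator (fun _ => 2) x +
        ∑' n : ℕ, 2^(n+1) * (T n).indicator 1 x := by
    intro x
    by_cases hx : x ∈ closedBall (0:E) N
    · rw [indicator_of_mem hx, indicator_of_mem hx]
      refine (stmt8_dyadic_bound (locMax R g x)).trans ?_
      refine add_le_add_right (ENNReal.tsum_le_tsum fun n => mul_le_mul_right ?_ _) 2
      split_ifs with hcond
      · have hxT : x ∈ T n := subset_toMeasurable _ _ ⟨hx, hcond⟩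
        simp [indicator_of_mem hxT]
      · exact zero_le
    · rw [indicator_of_notMem hx]
      exact zero_le
  have key1 : ∫⁻ x in closedBall (0:E) N, locMax R g x ≤
      2 * volume (closedBall (0:E) N) + ∑' n : ℕ, 2^(n+1) * volume (S n) := by
    rw [← lintegral_indicator measurableSet_closedBall]
    calc ∫⁻ x, (closedBall (0:E) N).indicator (locMax R g) x
        ≤ ∫⁻ x, ((closedBall (0:E) N).indicator (fun _ => 2) x +
            ∑' n : ℕ, 2^(n+1) * (T n).indicator 1 x) := lintegral_mono hpt
      _ = (∫⁻ x, (closedBall (0:E) N).indicator (fun _ => 2) x) +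
            ∫⁻ x, ∑' n : ℕ, 2^(n+1) * (T n).indicator 1 x :=
          lintegral_add_left (measurable_const.indicator measurableSet_closedBall) _
      _ = 2 * volume (closedBall (0:E) N) + ∑' n : ℕ, 2^(n+1) * volume (S n) := by
          congr 1
          · rw [lintegral_indicator_const measurableSet_closedBall]
          · rw [lintegral_tsum (fun n => ((measurable_one.indicator
              (measurableSet_toMeasurable _ _)).const_mul _).aemeasurable)]
            refine tsum_congr fun n => ?_
            rw [lintegral_const_mul _ (measurable_one.indicator (measurableSet_toMeasurable _ _)),
              lintegral_indicator_one (measurableSet_toMeasurable _ _)]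
            exact congrArg _ (measure_toMeasurable _)
  have key2 : ∑' n : ℕ, (2:ℝ≥0∞)^(n+1) * volume (S n) ≤
      (4 * ENNReal.ofReal ((5:ℝ)^d)) *
        ∫⁻ z in closedBall (0:E) (N+R), ∑' n : ℕ, hfun n z := by
    calc ∑' n : ℕ, (2:ℝ≥0∞)^(n+1) * volume (S n)
        ≤ ∑' n : ℕ, (2:ℝ≥0∞)^(n+1) * (ENNReal.ofReal ((5:ℝ)^d) * ((2:ℝ≥0∞)^n/2)⁻¹ *
            ∫⁻ z in closedBall (0:E) (N+R), hfun n z) :=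
          ENNReal.tsum_le_tsum fun n => mul_le_mul_right (hSn n) _
      _ = ∑' n : ℕ, (4 * ENNReal.ofReal ((5:ℝ)^d)) *
            ∫⁻ z in closedBall (0:E) (N+R), hfun n z := by
          refine tsum_congr fun n => ?_
          rw [stmt8_coeff n, mul_assoc]
      _ = (4 * ENNReal.ofReal ((5:ℝ)^d)) *
            ∑' n : ℕ, ∫⁻ z in closedBall (0:E) (N+R), hfun n z := ENNReal.tsum_mul_left
      _ = _ := by
          rw [lintegral_tsum (fun n => (hfunm n).aemeasurable)]
  have key3 : ∫⁻ z in closedBall (0:E) (N+R), ∑' n : ℕ, hfun n z ≤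
      ENNReal.ofReal c₀ * ∫⁻ z in closedBall (0:E) (N+R), L z := by
    have hLm : Measurable L :=
      (hf.abs.mul ((hf.abs.add_const 1).log)).ennreal_ofReal
    rw [← lintegral_const_mul _ hLm]
    refine lintegral_mono fun z => ?_
    have hcb := stmt8_count_bound |f z| (abs_nonneg _)
    refine le_trans (le_of_eq ?_) (hcb.trans ?_)
    · rfl
    · rw [ENNReal.ofReal_mul hc₀pos.le]
  have hvfin : (2:ℝ≥0∞) * volume (closedBall (0:E) N) ≠ ⊤ :=
    ENNReal.mul_ne_top (by norm_num) measure_closedBall_lt_top.ne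
  calc ∫⁻ x in closedBall (0:E) N, locMax R g x
      ≤ 2 * volume (closedBall (0:E) N) + ∑' n : ℕ, 2^(n+1) * volume (S n) := key1
    _ ≤ 2 * volume (closedBall (0:E) N) +
        (4 * ENNReal.ofReal ((5:ℝ)^d)) *
          (ENNReal.ofReal c₀ * ∫⁻ z in closedBall (0:E) (N+R), L z) := by
        refine add_le_add_right (key2.trans ?_) _
        exact mul_le_mul_right key3 _
    _ ≤ ENNReal.ofReal ((2 * volume (closedBall (0:E) N)).toReal + 1) +
        ENNReal.ofReal (4 * 5^d * c₀) * ∫⁻ z in closedBall (0:E) (N+R), L z := by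
        refine add_le_add ?_ (le_of_eq ?_)
        · have h1 : (2:ℝ≥0∞) * volume (closedBall (0:E) N) =
              ENNReal.ofReal ((2 * volume (closedBall (0:E) N)).toReal) :=
            (ENNReal.ofReal_toReal hvfin).symm
          exact h1.le.trans (ENNReal.ofReal_le_ofReal (by linarith))
        · rw [ENNReal.ofReal_mul (by positivity : (0:ℝ) ≤ 4 * 5^d),
            ENNReal.ofReal_mul (by norm_num : (0:ℝ) ≤ 4), ENNReal.ofReal_ofNat]
          ring
end

section
/- Let (Ω,ℱ,P) be a probability space and let 𝒢 and 𝒜 be two independent sub-σ-algebras of ℱ. Let G : Ω×ℝ^d → ℝ be a bounded 𝒢⊗ℬ(ℝ^d)-measurable function and X : Ω×ℝ^d → ℝ^d an 𝒜⊗ℬ(ℝ^d)-measurable mapping. Suppose that for P-almost every ω, the image of Lebesgue measure under X(ω,·) is absolutely continuous with respect to Lebesgue measure. Then for Lebesgue-almost every x ∈ ℝ^d, the conditional expectation satisfies E[ G(·, X(·,x)) | 𝒜 ](ω) = h(X(ω,x)) for P-almost every ω, where h(y) := E[G(·,y)]. -/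
open MeasureTheory Metric Set
open scoped ENNReal NNReal

section Aux

lemma aux_prod_mono {α β : Type*} {m m' : MeasurableSpace α} (h : m ≤ m')
    (mb : MeasurableSpace β) : m.prod mb ≤ m'.prod mb :=
  sup_le_sup (MeasurableSpace.comap_mono h) le_rfl

lemma aux_sm {α Ω : Type*} [MeasurableSpace α] [MeasurableSpace Ω]
    (P : Measure Ω) [SFinite P] (G : Ω × α → ℝ) (hG : Measurable G) :
    StronglyMeasurable (fun y => ∫ ω, G (ω, y) ∂P) :=
  hG.stronglyMeasurable.integral_prod_left'

lemma aux_on {Ω : Type*} [MeasurableSpace Ω] (P : Measure Ω) (s : Set Ω)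
    (f : Ω → ℝ) (hf : Integrable f P) : IntegrableOn f s P :=
  hf.integrableOn

lemma aux_ind {Ω : Type*} [MeasurableSpace Ω] (P : Measure Ω) (s : Set Ω)
    (hs : MeasurableSet s) (f : Ω → ℝ) :
    ∫ ω, s.indicator (fun _ => (1 : ℝ)) ω * f ω ∂P = ∫ ω in s, f ω ∂P := by
  rw [← integral_indicator hs]
  congr 1
  ext ω
  by_cases hω : ω ∈ s <;> simp [hω]

lemma aux_int {α β Ω : Type*} [MeasurableSpace α] [MeasurableSpace β]
    [MeasurableSpace Ω] (P : Measure Ω) [IsProbabilityMeasure P]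
    (fG : Ω → α) (fA : Ω → β) (hG : Measurable fG) (hA : Measurable fA)
    (hindep : ∀ A B, MeasurableSet A → MeasurableSet B →
      P (fG ⁻¹' A ∩ fA ⁻¹' B) = P (fG ⁻¹' A) * P (fA ⁻¹' B))
    (Φ : α × β → ℝ) (hΦ : Measurable Φ) (C : ℝ) (hbd : ∀ p, |Φ p| ≤ C) :
    ∫ ω, Φ (fG ω, fA ω) ∂P = ∫ ω', ∫ ω, Φ (fG ω, fA ω') ∂P ∂P := by
  have hT : Measurable (fun ω => (fG ω, fA ω)) := hG.prodMk hA
  haveI : IsProbabilityMeasure (P.map fG) := Measure.isProbabilityMeasure_map hG.aemeasurable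
  haveI : IsProbabilityMeasure (P.map fA) := Measure.isProbabilityMeasure_map hA.aemeasurable
  haveI : IsProbabilityMeasure (P.map (fun ω => (fG ω, fA ω))) :=
    Measure.isProbabilityMeasure_map hT.aemeasurable
  have hmap : P.map (fun ω => (fG ω, fA ω)) = (P.map fG).prod (P.map fA) := by
    refine ext_of_generate_finite _ generateFrom_prod.symm isPiSystem_prod ?_ ?_
    · rintro S ⟨A, hA', B, hB', rfl⟩
      rw [Measure.map_apply hT (hA'.prod hB'), Measure.prod_prod,
        Measure.map_apply hG hA', Measure.map_apply hA hB']
      have hpre : (fun ω => (fG ω, fA ω)) ⁻¹' (A ×ˢ B) = fG ⁻¹' A ∩ fA ⁻¹' B := by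
        ext ω; simp [Set.mem_prod]
      rw [hpre]
      exact hindep A B hA' hB'
    · simp [measure_univ]
  have hΦsm : StronglyMeasurable Φ := hΦ.stronglyMeasurable
  have hint : Integrable Φ ((P.map fG).prod (P.map fA)) :=
    (integrable_const C).mono' hΦ.aestronglyMeasurable
      (ae_of_all _ fun p => by simpa using hbd p)
  have hΨ : StronglyMeasurable (fun p : Ω × β => Φ (fG p.1, p.2)) :=
    hΦsm.comp_measurable ((hG.comp measurable_fst).prodMk measurable_snd)
  calc ∫ ω, Φ (fG ω, fA ω) ∂P
      = ∫ p, Φ p ∂(P.map (fun ω => (fG ω, fA ω))) :=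
        (integral_map hT.aemeasurable
          (by rw [hmap]; exact hΦ.aestronglyMeasurable)).symm
    _ = ∫ p, Φ p ∂((P.map fG).prod (P.map fA)) := by rw [hmap]
    _ = ∫ y, ∫ x, Φ (x, y) ∂(P.map fG) ∂(P.map fA) := integral_prod_symm Φ hint
    _ = ∫ y, ∫ ω, Φ (fG ω, y) ∂P ∂(P.map fA) := by
        refine integral_congr_ae (ae_of_all _ fun y => ?_)
        exact integral_map hG.aemeasurable
          (hΦ.comp (measurable_id.prodMk measurable_const)).aestronglyMeasurable
    _ = ∫ ω', ∫ ω, Φ (fG ω, fA ω') ∂P ∂P :=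
        integral_map hA.aemeasurable
          (StronglyMeasurable.integral_prod_left' (μ := P) hΨ).aestronglyMeasurable

end Aux

/-- Let `𝒢` and `𝒜` be independent sub-σ-algebras of a probability space
`(Ω,ℱ,P)`, `G : Ω×ℝ^d → ℝ` bounded and `𝒢⊗ℬ(ℝ^d)`-measurable, and `X : Ω×ℝ^d → ℝ^d`
`𝒜⊗ℬ(ℝ^d)`-measurable such that for `P`-a.e. `ω` the image of Lebesgue measure under `X(ω,·)`
is absolutely continuous w.r.t. Lebesgue measure. Then for Lebesgue-a.e. `x`,
`E[G(·,X(·,x)) | 𝒜] = h(X(·,x))` `P`-a.s., where `h(y) := E[G(·,y)]`. -/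
theorem stmt12 {d : ℕ} {Ω : Type*} [mΩ : MeasurableSpace Ω]
    (P : Measure Ω) [IsProbabilityMeasure P]
    (m𝒢 m𝒜 : MeasurableSpace Ω) (h𝒢 : m𝒢 ≤ mΩ) (h𝒜 : m𝒜 ≤ mΩ)
    (hindep : ProbabilityTheory.Indep m𝒢 m𝒜 P)
    (G : Ω × EuclideanSpace ℝ (Fin d) → ℝ)
    (hGmeas : Measurable[m𝒢.prod
      (inferInstance : MeasurableSpace (EuclideanSpace ℝ (Fin d)))] G)
    (K : ℝ) (hGbdd : ∀ p, |G p| ≤ K)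
    (X : Ω × EuclideanSpace ℝ (Fin d) → EuclideanSpace ℝ (Fin d))
    (hXmeas : Measurable[m𝒜.prod
      (inferInstance : MeasurableSpace (EuclideanSpace ℝ (Fin d)))] X)
    (habs : ∀ᵐ ω ∂P,
      (volume : Measure (EuclideanSpace ℝ (Fin d))).map (fun x => X (ω, x)) ≪
        (volume : Measure (EuclideanSpace ℝ (Fin d)))) :
    ∀ᵐ x ∂(volume : Measure (EuclideanSpace ℝ (Fin d))),
      P[(fun ω => G (ω, X (ω, x)))|m𝒜] =ᵐ[P]
        fun ω => ∫ ω', G (ω', X (ω, x)) ∂P := by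
  refine ae_of_all _ (fun x => ?_)
  set Y : Ω → EuclideanSpace ℝ (Fin d) := fun ω => X (ω, x) with hYdef
  have hY : Measurable[m𝒜] Y :=
    hXmeas.comp (@measurable_prodMk_right Ω (EuclideanSpace ℝ (Fin d)) m𝒜 _ x)
  have hYΩ : Measurable[mΩ] Y := fun t ht => h𝒜 _ (hY ht)
  have hGm : Measurable[mΩ.prod (inferInstance : MeasurableSpace (EuclideanSpace ℝ (Fin d)))] G := fun t ht => aux_prod_mono h𝒢 _ _ (hGmeas ht)
  set f : Ω → ℝ := fun ω => G (ω, Y ω) with hfdef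
  set g : Ω → ℝ := fun ω => ∫ ω', G (ω', Y ω) ∂P with hgdef
  have hfm : Measurable[mΩ] f := hGm.comp ((@measurable_id Ω mΩ).prodMk hYΩ)
  have hfint : Integrable f P :=
    Integrable.mono' (integrable_const K) hfm.aestronglyMeasurable
      (ae_of_all _ fun ω => hGbdd _)
  have hh : StronglyMeasurable (fun y => ∫ ω', G (ω', y) ∂P) :=
    @aux_sm (EuclideanSpace ℝ (Fin d)) Ω _ mΩ P _ G hGm
  have hgm : StronglyMeasurable[m𝒜] g :=
    hh.comp_measurable hY
  have hgint : Integrable g P := by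
    refine Integrable.mono' (integrable_const K)
      ((hgm.mono h𝒜).aestronglyMeasurable) (ae_of_all _ fun ω => ?_)
    calc ‖∫ ω', G (ω', Y ω) ∂P‖ ≤ ∫ ω', ‖G (ω', Y ω)‖ ∂P := norm_integral_le_integral_norm _
    _ ≤ ∫ _ω', K ∂P := by
        refine integral_mono_of_nonneg (ae_of_all _ fun _ => norm_nonneg _)
          (integrable_const K) (ae_of_all _ fun ω' => by
            simpa [Real.norm_eq_abs] using hGbdd (ω', Y ω))
    _ = K := by simp
  haveI : IsProbabilityMeasure (P.trim h𝒜) :=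
    ⟨by rw [trim_measurableSet_eq h𝒜 MeasurableSet.univ]; exact measure_univ⟩
  refine (ae_eq_condExp_of_forall_setIntegral_eq h𝒜 hfint
    (fun s _ _ => @aux_on Ω mΩ P s g hgint) (fun s hs _ => ?_)
    hgm.aestronglyMeasurable).symm
  -- the key identity on the set s
  set Φ : Ω × Ω → ℝ := fun p => s.indicator (fun _ => (1 : ℝ)) p.2 * G (p.1, Y p.2)
    with hΦdef
  have hind : Measurable[m𝒜] (s.indicator (fun _ => (1 : ℝ))) :=
    (@measurable_const ℝ Ω _ m𝒜 1).indicator hs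
  have hΦm : Measurable[m𝒢.prod m𝒜] Φ := by
    refine Measurable.mul ?_ ?_
    · exact hind.comp (@measurable_snd Ω Ω m𝒢 m𝒜)
    · exact hGmeas.comp ((@measurable_fst Ω Ω m𝒢 m𝒜).prodMk
        (hY.comp (@measurable_snd Ω Ω m𝒢 m𝒜)))
  have hΦbd : ∀ p, |Φ p| ≤ max K 0 := by
    intro p
    rw [hΦdef]
    by_cases hp : p.2 ∈ s
    · simp only [Set.indicator_of_mem hp, one_mul]
      exact le_max_of_le_left (hGbdd _)
    · simp [Set.indicator_of_notMem hp]
  have hind : ∀ A B, MeasurableSet[m𝒢] A → MeasurableSet[m𝒜] B →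
      P (id ⁻¹' A ∩ id ⁻¹' B) = P (id ⁻¹' A) * P (id ⁻¹' B) := by
    intro A B hA hB
    simpa using (ProbabilityTheory.Indep_iff m𝒢 m𝒜 P).1 hindep A B hA hB
  have key := @aux_int Ω Ω Ω m𝒢 m𝒜 mΩ P _ id id
    (measurable_id'' h𝒢) (measurable_id'' h𝒜) hind Φ hΦm (max K 0) hΦbd
  simp only [id_eq] at key
  have hsΩ : MeasurableSet[mΩ] s := h𝒜 s hs
  have hL : ∫ ω, Φ (ω, ω) ∂P = ∫ ω in s, f ω ∂P :=
    @aux_ind Ω mΩ P s hsΩ f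
  have hR : ∫ ω', ∫ ω, Φ (ω, ω') ∂P ∂P = ∫ ω in s, g ω ∂P := by
    have hinner : ∀ ω', ∫ ω, Φ (ω, ω') ∂P
        = s.indicator (fun _ => (1 : ℝ)) ω' * g ω' := by
      intro ω'
      simp only [hΦdef]
      simpa [smul_eq_mul] using
        integral_smul (μ := P) (s.indicator (fun _ => (1 : ℝ)) ω')
          (fun ω => G (ω, Y ω'))
    rw [integral_congr_ae (ae_of_all _ hinner)]
    exact @aux_ind Ω mΩ P s hsΩ g
  rw [← hR, ← key, hL]
end

section
/- Let d ≥ 3, n ≥ 1 an integer, and β ≥ (4d² + 5d)/(d − 2). Define on ℝ^d the smooth functions b_n^i(x) = β x^i/(|x|² + 1/n) and σ_n^{il}(x) = x^i x^l/(|x|² + 1/n), for i, l = 1,…,d. Then div b_n(x) = Σ_i ∂_i b_n^i(x) = β(d−2)/(|x|²+1/n) + 2β/(n(|x|²+1/n)²), and for every x ∈ ℝ^d the following inequality holds: −div b_n(x) + (1/2) Σ_{i,j,l} ∂_i σ_n^{jl}(x) ∂_j σ_n^{il}(x) + Σ_{i,j,l} σ_n^{il}(x) ∂²_{ij} σ_n^{jl}(x)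 + Σ_l ( Σ_i ∂_i σ_n^{il}(x) )² ≤ 0. -/
open MeasureTheory
open scoped BigOperators

/-- The partial derivative `∂_i f` on `ℝ^d`. -/
noncomputable def pd {d : ℕ} (i : Fin d) (f : EuclideanSpace ℝ (Fin d) → ℝ)
    (x : EuclideanSpace ℝ (Fin d)) : ℝ :=
  fderiv ℝ f x (EuclideanSpace.single i 1)

/-- The vector field `b_n^i(x) = β x^i/(|x|² + 1/n)`. -/
noncomputable def bFld (d n : ℕ) (β : ℝ) (i : Fin d) (x : EuclideanSpace ℝ (Fin d)) : ℝ :=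
  β * x i / (‖x‖ ^ 2 + 1 / (n : ℝ))

/-- The matrix field `σ_n^{il}(x) = x^i x^l/(|x|² + 1/n)`. -/
noncomputable def sFld (d n : ℕ) (i l : Fin d) (x : EuclideanSpace ℝ (Fin d)) : ℝ :=
  x i * x l / (‖x‖ ^ 2 + 1 / (n : ℝ))

section Aux

variable {d : ℕ}

local notation "E" => EuclideanSpace ℝ (Fin d)

lemma normsq_eq (x : E) : ‖x‖ ^ 2 = ∑ j, x j ^ 2 := by
  rw [EuclideanSpace.norm_eq, Real.sq_sqrt (by positivity)]
  simp [sq_abs]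

noncomputable def ND (x : E) : E →L[ℝ] ℝ := ∑ j, (2 * x j) • EuclideanSpace.proj j

lemma ND_apply (x : E) (i : Fin d) : ND x (EuclideanSpace.single i 1) = 2 * x i := by
  simp [ND, ContinuousLinearMap.sum_apply, EuclideanSpace.single_apply]

lemma hasFDerivAt_normsq (x : E) : HasFDerivAt (fun y : E => ‖y‖ ^ 2) (ND x) x := by
  have h : ∀ j : Fin d, HasFDerivAt (fun y : E => y j ^ 2)
      ((2 * x j) • (EuclideanSpace.proj j : E →L[ℝ] ℝ)) x := by
    intro j
    have h0 := (EuclideanSpace.proj (𝕜 := ℝ) (i := j) (ι := Fin d)).hasFDerivAt (x := x)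
    have := h0.mul h0
    have h2 : (fun y : E => y j ^ 2) = fun y : E => y j * y j := by ext y; ring
    rw [h2]
    refine this.congr_fderiv ?_
    ext v
    simp [two_mul]
    ring
  have h2 := HasFDerivAt.fun_sum (u := Finset.univ) (fun j (_ : j ∈ Finset.univ) => h j)
  have he : (fun y : E => ‖y‖ ^ 2) = fun y : E => ∑ j, y j ^ 2 := funext normsq_eq
  rw [he, ND]
  exact h2

noncomputable def iQ (d n : ℕ) (y : EuclideanSpace ℝ (Fin d)) : ℝ := (‖y‖ ^ 2 + 1 / (n : ℝ))⁻¹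

lemma Q_pos {n : ℕ} (hn : 1 ≤ n) (x : E) : 0 < ‖x‖ ^ 2 + 1 / (n : ℝ) := by
  have h1 : (0:ℝ) < (n : ℝ) := by exact_mod_cast hn
  have : (0:ℝ) < 1 / (n:ℝ) := by positivity
  positivity

lemma hiQ {n : ℕ} (hn : 1 ≤ n) (x : E) :
    HasFDerivAt (iQ d n) ((-(iQ d n x ^ 2)) • ND x) x := by
  have hQ : HasFDerivAt (fun y : E => ‖y‖ ^ 2 + 1 / (n : ℝ)) (ND x) x :=
    (hasFDerivAt_normsq x).add_const _
  have hne : ‖x‖ ^ 2 + 1 / (n : ℝ) ≠ 0 := (Q_pos hn x).ne'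
  have hinv := (hasDerivAt_inv hne).comp_hasFDerivAt x hQ
  unfold iQ
  refine hinv.congr_fderiv ?_
  ext v
  simp [iQ]

lemma pd_of {f : E → ℝ} {f' : E →L[ℝ] ℝ} {x : E} (h : HasFDerivAt f f' x) (i : Fin d) :
    pd i f x = f' (EuclideanSpace.single i 1) := by rw [pd, h.fderiv]

lemma hasFDerivAt_sFld {n : ℕ} (hn : 1 ≤ n) (i l : Fin d) (x : E) :
    HasFDerivAt (sFld d n i l)
      ((x i * x l) • ((-(iQ d n x ^ 2)) • ND x) +
        iQ d n x • (x i • (EuclideanSpace.proj l : E →L[ℝ] ℝ) + x l • EuclideanSpace.proj i)) x := by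
  have hc : HasFDerivAt (fun y : E => y i * y l)
      (x i • (EuclideanSpace.proj l : E →L[ℝ] ℝ) + x l • EuclideanSpace.proj i) x :=
    ((EuclideanSpace.proj (𝕜 := ℝ) (ι := Fin d) i).hasFDerivAt (x := x)).mul
      ((EuclideanSpace.proj (𝕜 := ℝ) (ι := Fin d) l).hasFDerivAt (x := x))
  have := hc.mul (hiQ hn x)
  have he : sFld d n i l = fun y : E => (y i * y l) * iQ d n y := by
    funext y; rw [sFld, iQ, div_eq_mul_inv]
  rw [he]
  exact this

lemma pd_sFld {n : ℕ} (hn : 1 ≤ n) (k i l : Fin d) (x : E) :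
    pd k (sFld d n i l) x =
      iQ d n x * ((if i = k then 1 else 0) * x l + (if l = k then 1 else 0) * x i)
        - 2 * x i * x l * x k * iQ d n x ^ 2 := by
  rw [pd_of (hasFDerivAt_sFld hn i l x)]
  simp [ND_apply, EuclideanSpace.single_apply, smul_eq_mul]
  split_ifs <;> ring

lemma pd_bFld {n : ℕ} (hn : 1 ≤ n) (β : ℝ) (k i : Fin d) (x : E) :
    pd k (bFld d n β i) x =
      β * (if i = k then 1 else 0) * iQ d n x - 2 * β * x i * x k * iQ d n x ^ 2 := by
  have hc : HasFDerivAt (fun y : E => β * y i) (β • (EuclideanSpace.proj i : E →L[ℝ] ℝ)) x :=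
    ((EuclideanSpace.proj (𝕜 := ℝ) (ι := Fin d) i).hasFDerivAt (x := x)).const_mul β
  have h := hc.fun_mul (hiQ hn x)
  have he : bFld d n β i = fun y : E => (β * y i) * iQ d n y := by
    funext y; rw [bFld, iQ, div_eq_mul_inv]
  rw [he, pd_of h]
  simp [ND_apply, EuclideanSpace.single_apply, smul_eq_mul]
  split_ifs <;> ring

lemma sfun_eq {n : ℕ} (hn : 1 ≤ n) (j l : Fin d) :
    pd j (sFld d n j l) = fun y : EuclideanSpace ℝ (Fin d) =>
      (y l + (if l = j then (1:ℝ) else 0) * y j) * iQ d n y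
        - 2 * ((y j * y j) * y l * (iQ d n y * iQ d n y)) := by
  funext y
  rw [pd_sFld hn]
  simp only [if_pos (rfl : j = j)]
  split_ifs <;> ring

lemma pd_pd_sFld {n : ℕ} (hn : 1 ≤ n) (k j l : Fin d) (x : E) :
    pd k (pd j (sFld d n j l)) x =
      iQ d n x * ((if l = k then 1 else 0) + (if l = j then 1 else 0) * (if j = k then 1 else 0))
      - 2 * (x l + (if l = j then 1 else 0) * x j) * x k * iQ d n x ^ 2
      + 8 * x j ^ 2 * x l * x k * iQ d n x ^ 3
      - 2 * iQ d n x ^ 2 * (x j ^ 2 * (if l = k then 1 else 0)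
          + 2 * x j * x l * (if j = k then 1 else 0)) := by
  rw [sfun_eq hn j l]
  set c := if l = j then (1:ℝ) else 0 with hc
  have h1 : HasFDerivAt (fun y : E => y l + c * y j)
      ((EuclideanSpace.proj l : E →L[ℝ] ℝ) + c • EuclideanSpace.proj j) x :=
    ((EuclideanSpace.proj (𝕜 := ℝ) (ι := Fin d) l).hasFDerivAt (x := x)).add
      (((EuclideanSpace.proj (𝕜 := ℝ) (ι := Fin d) j).hasFDerivAt (x := x)).const_mul c)
  have h2 := h1.fun_mul (hiQ hn x)
  have h3 : HasFDerivAt (fun y : E => y j * y j * y l)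
      ((x j * x j) • (EuclideanSpace.proj l : E →L[ℝ] ℝ)
        + x l • (x j • (EuclideanSpace.proj j : E →L[ℝ] ℝ) + x j • EuclideanSpace.proj j)) x :=
    (((EuclideanSpace.proj (𝕜 := ℝ) (ι := Fin d) j).hasFDerivAt (x := x)).mul
      ((EuclideanSpace.proj (𝕜 := ℝ) (ι := Fin d) j).hasFDerivAt (x := x))).mul
      ((EuclideanSpace.proj (𝕜 := ℝ) (ι := Fin d) l).hasFDerivAt (x := x))
  have h5 := (h3.fun_mul ((hiQ hn x).fun_mul (hiQ hn x))).const_mul 2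
  have h6 := h2.fun_sub h5
  rw [pd_of h6]
  simp [ND_apply, EuclideanSpace.single_apply, smul_eq_mul]
  split_ifs <;> ring

lemma sFld_eq {n : ℕ} (i l : Fin d) (x : E) :
    sFld d n i l x = x i * x l * iQ d n x := by
  rw [sFld, iQ, div_eq_mul_inv]

end Aux

section SumAlg

open Finset

lemma sum_ite_const {α : Type*} [Fintype α] {P : Prop} [Decidable P] (f : α → ℝ) :
    (∑ j : α, if P then f j else 0) = if P then ∑ j : α, f j else 0 := by
  split_ifs <;> simp

lemma csum_eq {d : ℕ} (c : ℝ) (F : Fin d → ℝ) (h : ∀ i, F i = c) :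
    ∑ i, F i = (d : ℝ) * c := by
  simp_rw [h, Finset.sum_const, Finset.card_univ, nsmul_eq_mul, Fintype.card_fin]

lemma osum_eq {d : ℕ} (c : ℝ) (f : Fin d → ℝ) (F : Fin d → ℝ) (h : ∀ i, F i = c * f i) :
    ∑ i, F i = c * ∑ i, f i := by simp_rw [h, Finset.mul_sum]

lemma dsum_eq {d : ℕ} (c : ℝ) (f g : Fin d → ℝ) (F : Fin d → Fin d → ℝ)
    (h : ∀ i j, F i j = c * (f i * g j)) :
    ∑ i, ∑ j, F i j = c * ((∑ i, f i) * (∑ j, g j)) := by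
  simp_rw [h, Fintype.sum_mul_sum, Finset.mul_sum]

lemma tsum_eq {d : ℕ} (c : ℝ) (f g h : Fin d → ℝ) (F : Fin d → Fin d → Fin d → ℝ)
    (hF : ∀ i j l, F i j l = c * (f i * (g j * h l))) :
    ∑ i, ∑ j, ∑ l, F i j l = c * ((∑ i, f i) * ((∑ j, g j) * (∑ l, h l))) := by
  simp_rw [hF, Fintype.sum_mul_sum, Finset.mul_sum]

lemma dcsum_eq {d : ℕ} (c : ℝ) (f : Fin d → ℝ) (F : Fin d → Fin d → ℝ)
    (h : ∀ i j, F i j = c * f i) :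
    ∑ i, ∑ j, F i j = (d : ℝ) * (c * ∑ i, f i) := by
  have : ∀ i, ∑ j, F i j = (d : ℝ) * (c * f i) := by
    intro i
    rw [csum_eq (c * f i) _ (fun j => h i j)]
  simp_rw [this]
  rw [osum_eq ((d : ℝ) * c) f _ (fun i => by ring)]
  ring

lemma tcsum_eq {d : ℕ} (c : ℝ) (f g : Fin d → ℝ) (F : Fin d → Fin d → Fin d → ℝ)
    (h : ∀ i j l, F i j l = c * (f i * g l)) :
    ∑ i, ∑ j, ∑ l, F i j l = (d : ℝ) * (c * ((∑ i, f i) * (∑ l, g l))) := by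
  have h1 : ∀ i j, ∑ l, F i j l = (c * f i) * ∑ l, g l := by
    intro i j
    exact osum_eq (c * f i) g _ (fun l => by rw [h]; ring)
  simp_rw [h1]
  rw [dcsum_eq (c * ∑ l, g l) f _ (fun i j => by ring)]
  ring

lemma S0alg (d : ℕ) (x : Fin d → ℝ) (q β : ℝ) :
    ∑ i, (β * (if i = i then (1:ℝ) else 0) * q - 2 * β * x i * x i * q ^ 2)
      = β * d * q - 2 * β * (∑ i, x i * x i) * q ^ 2 := by
  simp only [eq_self_iff_true, if_true, mul_one, Finset.sum_sub_distrib]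
  rw [csum_eq (β * q) _ (fun i => by ring),
    osum_eq (2 * β * q ^ 2) (fun i => x i * x i) _ (fun i => by ring)]
  ring

lemma S2alg (d : ℕ) (x : Fin d → ℝ) (q : ℝ) :
  ∑ i, ∑ j, ∑ l,
    ((q * ((if j = i then (1:ℝ) else 0) * x l + (if l = i then 1 else 0) * x j) - 2 * x j * x l * x i * q ^ 2) *
    (q * ((if i = j then (1:ℝ) else 0) * x l + (if l = j then 1 else 0) * x i) - 2 * x i * x l * x j * q ^ 2))
  = ((d:ℝ) + 3) * (∑ i, x i * x i) * q ^ 2 - 8 * (∑ i, x i * x i) ^ 2 * q ^ 3 + 4 * (∑ i, x i * x i) ^ 3 * q ^ 4 := by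
  simp only [sub_mul, mul_sub, add_mul, mul_add, mul_ite, ite_mul, one_mul, mul_one, zero_mul,
    mul_zero, Finset.sum_add_distrib, Finset.sum_sub_distrib, sum_ite_const, Finset.sum_ite_eq,
    Finset.sum_ite_eq', Finset.mem_univ, if_true]
  have hone : (∑ j : Fin d, q * x j * (q * x j)) = q ^ 2 * ∑ i, x i * x i := by
    rw [Finset.mul_sum]; exact Finset.sum_congr rfl fun i _ => by ring
  rw [csum_eq (q ^ 2 * ∑ i, x i * x i) _ (fun i => by rw [Finset.mul_sum]; exact Finset.sum_congr rfl (fun j _ => by ring)),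
    dsum_eq (2*q^3) (fun i => x i * x i) (fun j => x j * x j) _ (fun i j => by ring),
    dsum_eq (2*q^3) (fun i => x i * x i) (fun j => x j * x j) _ (fun i j => by ring),
    dsum_eq (2*q^3) (fun i => x i * x i) (fun j => x j * x j) _ (fun i j => by ring),
    dsum_eq (2*q^3) (fun i => x i * x i) (fun j => x j * x j) _ (fun i j => by ring),
    tsum_eq (4*q^4) (fun i => x i * x i) (fun j => x j * x j) (fun l => x l * x l) _ (fun i j l => by ring)]
  simp only [hone]
  ring

lemma S4alg (d : ℕ) (x : Fin d → ℝ) (q : ℝ) :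
    ∑ l, (∑ i, (q * (x l + (if l = i then (1:ℝ) else 0) * x i)
        - 2 * x i * x l * x i * q ^ 2)) ^ 2
      = (∑ i, x i * x i) * (((d:ℝ) + 1) * q - 2 * (∑ i, x i * x i) * q ^ 2) ^ 2 := by
  have hin : ∀ l, (∑ i, (q * (x l + (if l = i then (1:ℝ) else 0) * x i)
        - 2 * x i * x l * x i * q ^ 2))
      = x l * (((d:ℝ) + 1) * q - 2 * (∑ i, x i * x i) * q ^ 2) := by
    intro l
    simp only [mul_add, add_mul, mul_ite, ite_mul, mul_one, one_mul, mul_zero, zero_mul,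
      Finset.sum_add_distrib, Finset.sum_sub_distrib, Finset.sum_ite_eq, Finset.sum_ite_eq',
      Finset.mem_univ, if_true]
    rw [csum_eq (q * x l) _ (fun i => rfl),
      osum_eq (2 * x l * q ^ 2) (fun i => x i * x i) _ (fun i => by ring)]
    ring
  simp_rw [hin]
  rw [show (∑ i, x i * x i) * (((d:ℝ) + 1) * q - 2 * (∑ i, x i * x i) * q ^ 2) ^ 2
      = ∑ l, (x l * x l) * ((((d:ℝ) + 1) * q - 2 * (∑ i, x i * x i) * q ^ 2) ^ 2) from by
    rw [Finset.sum_mul]]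
  exact Finset.sum_congr rfl fun l _ => by ring

lemma S3alg (d : ℕ) (x : Fin d → ℝ) (q : ℝ) :
    ∑ i, ∑ j, ∑ l, (x i * x l * q) *
      (q * ((if l = i then (1:ℝ) else 0) + (if l = j then 1 else 0) * (if j = i then 1 else 0))
        - 2 * (x l + (if l = j then 1 else 0) * x j) * x i * q ^ 2
        + 8 * x j ^ 2 * x l * x i * q ^ 3
        - 2 * q ^ 2 * (x j ^ 2 * (if l = i then 1 else 0) + 2 * x j * x l * (if j = i then 1 else 0)))
      = ((d:ℝ) + 1) * (∑ i, x i * x i) * q ^ 2 - (2 * (d:ℝ) + 8) * (∑ i, x i * x i) ^ 2 * q ^ 3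
        + 8 * (∑ i, x i * x i) ^ 3 * q ^ 4 := by
  simp only [sub_mul, mul_sub, add_mul, mul_add, mul_ite, ite_mul, one_mul, mul_one, zero_mul,
    mul_zero, Finset.sum_add_distrib, Finset.sum_sub_distrib, sum_ite_const, Finset.sum_ite_eq,
    Finset.sum_ite_eq', Finset.mem_univ, if_true]
  have e1 : (∑ x_1 : Fin d, ∑ x_2 : Fin d, x x_1 * x x_1 * q * q)
      = (d:ℝ) * ((q * q) * ∑ i, x i * x i) := dcsum_eq _ _ _ (fun i j => by ring)
  have e2 : (∑ x_1 : Fin d, x x_1 * x x_1 * q * q)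
      = (q * q) * ∑ i, x i * x i := osum_eq _ _ _ (fun i => by ring)
  have e3 : (∑ x_1 : Fin d, ∑ x_2 : Fin d, ∑ x_3 : Fin d,
        x x_1 * x x_3 * q * (2 * x x_3 * x x_1 * q ^ 2))
      = (d:ℝ) * ((2 * q ^ 3) * ((∑ i, x i * x i) * (∑ i, x i * x i))) :=
    tcsum_eq _ _ _ _ (fun i j l => by ring)
  have e4 : (∑ x_1 : Fin d, ∑ x_2 : Fin d, x x_1 * x x_2 * q * (2 * x x_2 * x x_1 * q ^ 2))
      = (2 * q ^ 3) * ((∑ i, x i * x i) * (∑ i, x i * x i)) := dsum_eq _ _ _ _ (fun i j => by ring)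
  have e5 : (∑ x_1 : Fin d, ∑ x_2 : Fin d, ∑ x_3 : Fin d,
        x x_1 * x x_3 * q * (8 * x x_2 ^ 2 * x x_3 * x x_1 * q ^ 3))
      = (8 * q ^ 4) * ((∑ i, x i * x i) * ((∑ i, x i * x i) * (∑ i, x i * x i))) :=
    tsum_eq _ _ _ _ _ (fun i j l => by ring)
  have e6 : (∑ x_1 : Fin d, ∑ x_2 : Fin d, x x_1 * x x_1 * q * (2 * q ^ 2 * x x_2 ^ 2))
      = (2 * q ^ 3) * ((∑ i, x i * x i) * (∑ i, x i * x i)) := dsum_eq _ _ _ _ (fun i j => by ring)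
  have e7 : (∑ x_1 : Fin d, ∑ j : Fin d, x x_1 * x j * q * (2 * q ^ 2 * (2 * x x_1 * x j)))
      = (4 * q ^ 3) * ((∑ i, x i * x i) * (∑ i, x i * x i)) := dsum_eq _ _ _ _ (fun i j => by ring)
  rw [e1, e2, e3, e4, e5, e6, e7]
  ring

end SumAlg

/-- For `d ≥ 3`, `n ≥ 1` and `β ≥ (4d²+5d)/(d−2)`, with
`b_n^i(x) = βx^i/(|x|²+1/n)` and `σ_n^{il}(x) = x^i x^l/(|x|²+1/n)`, one has
`div b_n(x) = β(d−2)/(|x|²+1/n) + 2β/(n(|x|²+1/n)²)` and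
`−div b_n + ½ Σ ∂_iσ^{jl}∂_jσ^{il} + Σ σ^{il}∂²_{ij}σ^{jl} + Σ_l (Σ_i ∂_iσ^{il})² ≤ 0`. -/
theorem stmt13 (d n : ℕ) (hd : 3 ≤ d) (hn : 1 ≤ n) (β : ℝ)
    (hβ : (4 * (d : ℝ) ^ 2 + 5 * d) / ((d : ℝ) - 2) ≤ β) :
    (∀ x : EuclideanSpace ℝ (Fin d),
      ∑ i, pd i (bFld d n β i) x =
        β * ((d : ℝ) - 2) / (‖x‖ ^ 2 + 1 / (n : ℝ)) +
          2 * β / ((n : ℝ) * (‖x‖ ^ 2 + 1 / (n : ℝ)) ^ 2)) ∧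
    (∀ x : EuclideanSpace ℝ (Fin d),
      -(∑ i, pd i (bFld d n β i) x) +
        (1 / 2) * ∑ i, ∑ j, ∑ l, pd i (sFld d n j l) x * pd j (sFld d n i l) x +
        (∑ i, ∑ j, ∑ l, sFld d n i l x * pd i (pd j (sFld d n j l)) x) +
        (∑ l, (∑ i, pd i (sFld d n i l) x) ^ 2) ≤ 0) := by
  have hd3 : (3:ℝ) ≤ (d:ℝ) := by exact_mod_cast hd
  have hd2 : (0:ℝ) < (d:ℝ) - 2 := by linarith
  have hn0 : (0:ℝ) < (n:ℝ) := by exact_mod_cast hn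
  have hβ' : 4 * (d:ℝ) ^ 2 + 5 * (d:ℝ) ≤ β * ((d:ℝ) - 2) := by
    rw [div_le_iff₀ hd2] at hβ
    linarith
  have hβ0 : 0 ≤ β := by nlinarith
  have hdd : 0 ≤ (6*(d:ℝ)^2 + 3*(d:ℝ) - 35)/2 := by nlinarith [sq_nonneg ((d:ℝ) - 3)]
  have hdiv : ∀ x : EuclideanSpace ℝ (Fin d),
      ∑ i, pd i (bFld d n β i) x
        = β * (d:ℝ) * iQ d n x - 2 * β * (∑ i, x i * x i) * iQ d n x ^ 2 := by
    intro x
    rw [show (∑ i, pd i (bFld d n β i) x)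
        = ∑ i, (β * (if i = i then (1:ℝ) else 0) * iQ d n x
            - 2 * β * x i * x i * iQ d n x ^ 2)
      from Finset.sum_congr rfl fun i _ => pd_bFld hn β i i x]
    exact S0alg d x (iQ d n x) β
  have hts : ∀ x : EuclideanSpace ℝ (Fin d), (∑ i, x i * x i) = ‖x‖ ^ 2 := by
    intro x
    rw [normsq_eq]
    exact Finset.sum_congr rfl fun i _ => (pow_two (x i)).symm
  constructor
  · intro x
    have hQ := Q_pos hn x
    have h1 : (‖x‖ ^ 2 + 1 / (n:ℝ)) ≠ 0 := hQ.ne'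
    have h2 : (n:ℝ) ≠ 0 := hn0.ne'
    rw [hdiv x, hts x]
    simp only [iQ]
    field_simp
    ring
  · intro x
    have hQ := Q_pos hn x
    have hQne : (‖x‖ ^ 2 + 1 / (n:ℝ)) ≠ 0 := hQ.ne'
    have h2 : (∑ i, ∑ j, ∑ l, pd i (sFld d n j l) x * pd j (sFld d n i l) x)
        = ((d:ℝ)+3) * (∑ i, x i * x i) * iQ d n x ^ 2
          - 8 * (∑ i, x i * x i) ^ 2 * iQ d n x ^ 3
          + 4 * (∑ i, x i * x i) ^ 3 * iQ d n x ^ 4 := by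
      rw [show (∑ i, ∑ j, ∑ l, pd i (sFld d n j l) x * pd j (sFld d n i l) x)
          = ∑ i, ∑ j, ∑ l,
            ((iQ d n x * ((if j = i then (1:ℝ) else 0) * x l + (if l = i then 1 else 0) * x j)
                - 2 * x j * x l * x i * iQ d n x ^ 2) *
             (iQ d n x * ((if i = j then (1:ℝ) else 0) * x l + (if l = j then 1 else 0) * x i)
                - 2 * x i * x l * x j * iQ d n x ^ 2))
        from Finset.sum_congr rfl fun i _ => Finset.sum_congr rfl fun j _ =>
          Finset.sum_congr rfl fun l _ => by rw [pd_sFld hn i j l x, pd_sFld hn j i l x]]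
      exact S2alg d x (iQ d n x)
    have h3 : (∑ i, ∑ j, ∑ l, sFld d n i l x * pd i (pd j (sFld d n j l)) x)
        = ((d:ℝ)+1) * (∑ i, x i * x i) * iQ d n x ^ 2
          - (2*(d:ℝ)+8) * (∑ i, x i * x i) ^ 2 * iQ d n x ^ 3
          + 8 * (∑ i, x i * x i) ^ 3 * iQ d n x ^ 4 := by
      rw [show (∑ i, ∑ j, ∑ l, sFld d n i l x * pd i (pd j (sFld d n j l)) x)
          = ∑ i, ∑ j, ∑ l, (x i * x l * iQ d n x) *
            (iQ d n x * ((if l = i then (1:ℝ) else 0)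
                + (if l = j then 1 else 0) * (if j = i then 1 else 0))
              - 2 * (x l + (if l = j then 1 else 0) * x j) * x i * iQ d n x ^ 2
              + 8 * x j ^ 2 * x l * x i * iQ d n x ^ 3
              - 2 * iQ d n x ^ 2 * (x j ^ 2 * (if l = i then 1 else 0)
                  + 2 * x j * x l * (if j = i then 1 else 0)))
        from Finset.sum_congr rfl fun i _ => Finset.sum_congr rfl fun j _ =>
          Finset.sum_congr rfl fun l _ => by
            rw [sFld_eq i l x, pd_pd_sFld hn i j l x]]
      exact S3alg d x (iQ d n x)
    have h4 : (∑ l, (∑ i, pd i (sFld d n i l) x) ^ 2)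
        = (∑ i, x i * x i) * (((d:ℝ)+1) * iQ d n x
            - 2 * (∑ i, x i * x i) * iQ d n x ^ 2) ^ 2 := by
      rw [show (∑ l, (∑ i, pd i (sFld d n i l) x) ^ 2)
          = ∑ l, (∑ i, (iQ d n x * (x l + (if l = i then (1:ℝ) else 0) * x i)
              - 2 * x i * x l * x i * iQ d n x ^ 2)) ^ 2
        from Finset.sum_congr rfl fun l _ => by
          rw [show (∑ i, pd i (sFld d n i l) x)
              = ∑ i, (iQ d n x * (x l + (if l = i then (1:ℝ) else 0) * x i)
                  - 2 * x i * x l * x i * iQ d n x ^ 2)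
            from Finset.sum_congr rfl fun i _ => by
              rw [pd_sFld hn i i l x]
              simp only [eq_self_iff_true, if_true, one_mul]]]
      exact S4alg d x (iQ d n x)
    rw [hdiv x, h2, h3, h4]
    set t : ℝ := ∑ i, x i * x i with htdef
    set Qv : ℝ := ‖x‖ ^ 2 + 1 / (n:ℝ) with hQvdef
    have hq' : iQ d n x = Qv⁻¹ := rfl
    have hQt : Qv - t = 1 / (n:ℝ) := by
      rw [htdef, hts x, hQvdef]; ring
    have ht0 : 0 ≤ t := Finset.sum_nonneg fun i _ => mul_self_nonneg (x i)
    have hQt0 : 0 ≤ Qv - t := by rw [hQt]; positivity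
    set P : ℝ := -(β * ((d:ℝ) * Qv - 2 * t) * Qv ^ 2)
        + ((2*(d:ℝ)^2 + 7*(d:ℝ) + 7)/2) * t * Qv ^ 2
        - (6*(d:ℝ) + 16) * t ^ 2 * Qv + 14 * t ^ 3 with hPdef
    clear_value t Qv P
    have hEP : -(β * (d:ℝ) * iQ d n x - 2 * β * t * iQ d n x ^ 2) +
        1 / 2 * (((d:ℝ)+3) * t * iQ d n x ^ 2 - 8 * t ^ 2 * iQ d n x ^ 3
          + 4 * t ^ 3 * iQ d n x ^ 4) +
        (((d:ℝ)+1) * t * iQ d n x ^ 2 - (2*(d:ℝ)+8) * t ^ 2 * iQ d n x ^ 3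
          + 8 * t ^ 3 * iQ d n x ^ 4) +
        t * (((d:ℝ)+1) * iQ d n x - 2 * t * iQ d n x ^ 2) ^ 2
        = iQ d n x ^ 4 * P := by
      rw [hq', hPdef]
      field_simp
      ring
    have hsub : β * ((d:ℝ) * Qv - 2 * t) * Qv ^ 2
        = β * ((d:ℝ) - 2) * Qv ^ 3 + 2 * β * (1/(n:ℝ)) * Qv ^ 2 := by
      linear_combination (2 * β * Qv ^ 2) * hQt
    have a1 : 0 ≤ (β * ((d:ℝ) - 2) - (4*(d:ℝ)^2 + 5*(d:ℝ))) * Qv ^ 3 :=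
      mul_nonneg (by linarith) (pow_nonneg hQ.le 3)
    have a2 : 0 ≤ ((6*(d:ℝ)^2 + 3*(d:ℝ) - 35)/2) * Qv ^ 3 :=
      mul_nonneg hdd (pow_nonneg hQ.le 3)
    have a3 : 0 ≤ ((2*(d:ℝ)^2 + 7*(d:ℝ) + 7)/2) * ((Qv - t) * Qv ^ 2) :=
      mul_nonneg (by positivity) (mul_nonneg hQt0 (pow_nonneg hQ.le 2))
    have a4 : 0 ≤ 14 * ((Qv - t) * (Qv * Qv + Qv * t + t * t)) :=
      mul_nonneg (by norm_num) (mul_nonneg hQt0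
        (add_nonneg (add_nonneg (mul_nonneg hQ.le hQ.le) (mul_nonneg hQ.le ht0))
          (mul_nonneg ht0 ht0)))
    have a5 : 0 ≤ 2 * β * (1/(n:ℝ)) * Qv ^ 2 :=
      mul_nonneg (mul_nonneg (by linarith) (by positivity)) (pow_nonneg hQ.le 2)
    have a6 : 0 ≤ (6*(d:ℝ) + 16) * (t ^ 2 * Qv) :=
      mul_nonneg (by positivity) (mul_nonneg (sq_nonneg t) hQ.le)
    have hP : P ≤ 0 := by
      rw [hPdef, hsub]
      linarith [a1, a2, a3, a4, a5, a6]
    have hq40 : 0 ≤ iQ d n x ^ 4 := by positivity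
    have hbound : iQ d n x ^ 4 * P ≤ 0 := mul_nonpos_of_nonneg_of_nonpos hq40 hP
    linarith [hEP, hbound]
end
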